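/- arXiv:1508.07838 — 8 statements merged into one kernel-verified Lean document; each statement's English description precedes it below -/
import Mathlib

section
/- Let P₁, P₂, …, P be probability measures on a measurable space (E, 𝓔) with densities f₁, f₂, …, f with respect to a σ-finite measure λ. Then liminf_{n→∞} fₙ = f holds λ-a.e. if and only if liminf_{n→∞} d P_n^{ac}/dP = 1 holds P-a.e., where P_n^{ac} denotes the absolutely continuous part of Pₙ with respect to P. -/
open MeasureTheory Filter
open scoped ENNReal

private lemma liminf_mul_const_aux (u : ℕ → ℝ≥0∞) {c : ℝ≥0∞} (hc : c ≠ ∞) :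
    Filter.liminf (fun n => u n * c) Filter.atTop = Filter.liminf u Filter.atTop * c := by
  have hmono : Monotone (fun x : ℝ≥0∞ => x * c) := fun a b hab => mul_le_mul_left hab c
  have hcont : ContinuousAt (fun x : ℝ≥0∞ => x * c) (Filter.liminf u Filter.atTop) :=
    (ENNReal.continuous_mul_const hc).continuousAt
  simpa [Function.comp_def] using (hmono.map_liminf_of_continuousAt u hcont).symm

/-- `liminf fₙ = f` `λ`-a.e. iff `liminf dPₙ^{ac}/dP = 1` `P`-a.e., where the
Radon–Nikodym derivative `(Pn).rnDeriv P` is the density of the absolutely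
continuous part of `Pₙ` with respect to `P`. -/
theorem stmt3 {E : Type*} [MeasurableSpace E]
    (lam : Measure E) [SigmaFinite lam]
    (Pn : ℕ → Measure E) (P : Measure E)
    [∀ n, IsProbabilityMeasure (Pn n)] [IsProbabilityMeasure P]
    (f : ℕ → E → ℝ≥0∞) (g : E → ℝ≥0∞)
    (hf : ∀ n, Measurable (f n)) (hg : Measurable g)
    (hPn : ∀ n, Pn n = lam.withDensity (f n)) (hP : P = lam.withDensity g) :
    (∀ᵐ x ∂lam, liminf (fun n => f n x) atTop = g x) ↔
      (∀ᵐ x ∂P, liminf (fun n => (Pn n).rnDeriv P x) atTop = 1) := by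
  -- basic facts about g
  have hgint : ∫⁻ x, g x ∂lam = 1 := by
    have h := measure_univ (μ := P)
    rwa [hP, withDensity_apply _ MeasurableSet.univ, Measure.restrict_univ] at h
  have hgtop : ∀ᵐ x ∂lam, g x < ∞ := ae_lt_top hg (by rw [hgint]; exact ENNReal.one_ne_top)
  have ht : MeasurableSet {x | g x = 0} := hg (measurableSet_singleton 0)
  -- P gives no mass to {g = 0}
  have hPt : P {x | g x = 0} = 0 := by
    rw [hP, withDensity_apply _ ht]
    rw [setLIntegral_congr_fun ht (fun x hx => hx)]
    simp
  -- the Radon-Nikodym derivative of Pn n with respect to P is f n / g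
  have rn : ∀ n, (fun x => f n x / g x) =ᵐ[P] (Pn n).rnDeriv P := by
    intro n
    have hmeas : AEMeasurable (fun x => f n x / g x) P := ((hf n).div hg).aemeasurable
    have hsing : lam.withDensity ({x | g x = 0}.indicator (f n)) ⟂ₘ P := by
      refine ⟨{x | g x = 0}ᶜ, ht.compl, ?_, ?_⟩
      · rw [withDensity_apply _ ht.compl]
        rw [setLIntegral_congr_fun ht.compl
          (fun x hx => Set.indicator_of_notMem hx _)]
        simp
      · rwa [compl_compl]
    refine Measure.eq_rnDeriv₀ hmeas hsing ?_
    have hDmeas : Measurable fun x => f n x / g x := (hf n).div hg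
    rw [hP, ← withDensity_mul lam hg hDmeas, ← withDensity_add_left ((hf n).indicator ht), hPn n]
    refine withDensity_congr_ae ?_
    filter_upwards [hgtop] with x hxtop
    simp only [Pi.add_apply, Pi.mul_apply]
    by_cases hx0 : g x = 0
    · simp [Set.indicator_of_mem, hx0, Set.mem_setOf_eq]
    · rw [Set.indicator_of_notMem (by simpa [Set.mem_setOf_eq] using hx0), zero_add,
        div_eq_mul_inv, mul_comm (f n x) (g x)⁻¹, ← mul_assoc,
        ENNReal.mul_inv_cancel hx0 hxtop.ne, one_mul]
  have rn' : ∀ᵐ x ∂P, ∀ n, (Pn n).rnDeriv P x = f n x / g x :=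
    ae_all_iff.2 fun n => (rn n).symm.mono fun x hx => hx
  -- replace rnDeriv by f n / g in the RHS
  have hrhs : (∀ᵐ x ∂P, liminf (fun n => (Pn n).rnDeriv P x) atTop = 1) ↔
      (∀ᵐ x ∂P, liminf (fun n => f n x / g x) atTop = 1) := by
    constructor <;> intro h <;> filter_upwards [h, rn'] with x hx hrn
    · rw [← hx]; exact liminf_congr (Eventually.of_forall fun n => (hrn n).symm)
    · rw [← hx]; exact liminf_congr (Eventually.of_forall fun n => hrn n)
  rw [hrhs, hP, ae_withDensity_iff hg]
  constructor
  · -- forward direction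
    intro h
    filter_upwards [h, hgtop] with x hx hxtop hx0
    have hcinv : (g x)⁻¹ ≠ ∞ := ENNReal.inv_ne_top.2 hx0
    calc liminf (fun n => f n x / g x) atTop
        = liminf (fun n => f n x * (g x)⁻¹) atTop := by simp [div_eq_mul_inv]
      _ = liminf (fun n => f n x) atTop * (g x)⁻¹ := liminf_mul_const_aux _ hcinv
      _ = g x * (g x)⁻¹ := by rw [hx]
      _ = 1 := ENNReal.mul_inv_cancel hx0 hxtop.ne
  · -- backward direction
    intro h
    set L : E → ℝ≥0∞ := fun x => liminf (fun n => f n x) atTop with hL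
    have hLmeas : Measurable L := Measurable.liminf hf
    have hL1 : ∀ᵐ x ∂lam, g x ≠ 0 → L x = g x := by
      filter_upwards [h, hgtop] with x hx hxtop hx0
      have hcinv : (g x)⁻¹ ≠ ∞ := ENNReal.inv_ne_top.2 hx0
      have hx' : L x * (g x)⁻¹ = 1 := by
        rw [hL, ← liminf_mul_const_aux _ hcinv, ← hx hx0]
        exact liminf_congr (Eventually.of_forall fun n => by rw [div_eq_mul_inv])
      have := congrArg (· * g x) hx'
      simpa [mul_assoc, ENNReal.inv_mul_cancel hx0 hxtop.ne] using this
    -- Fatou: total integral of L is at most 1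
    have hfatou : ∫⁻ x, L x ∂lam ≤ 1 := by
      calc ∫⁻ x, L x ∂lam ≤ liminf (fun n => ∫⁻ x, f n x ∂lam) atTop := lintegral_liminf_le hf
        _ = 1 := by
            have : ∀ n, ∫⁻ x, f n x ∂lam = 1 := fun n => by
              have h := measure_univ (μ := Pn n)
              rwa [hPn n, withDensity_apply _ MeasurableSet.univ, Measure.restrict_univ] at h
            simp only [this]; exact liminf_const 1
    -- integral of L over {g ≠ 0} equals 1
    have hcompl : ∫⁻ x in {x | g x = 0}ᶜ, L x ∂lam = 1 := by
      have h1 : ∫⁻ x in {x | g x = 0}ᶜ, L x ∂lam = ∫⁻ x in {x | g x = 0}ᶜ, g x ∂lam := by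
        refine lintegral_congr_ae ((ae_restrict_iff' ht.compl).2 ?_)
        filter_upwards [hL1] with x hx hxmem
        exact hx hxmem
      have h2 : ∫⁻ x in {x | g x = 0}, g x ∂lam = 0 := by
        rw [setLIntegral_congr_fun ht (fun x hx => hx)]; simp
      have h3 := lintegral_add_compl (μ := lam) g ht
      rw [h2, zero_add, hgint] at h3
      rw [h1, h3]
    -- hence integral of L over {g = 0} is zero
    have hzero : ∫⁻ x in {x | g x = 0}, L x ∂lam = 0 := by
      have hsum : ∫⁻ x in {x | g x = 0}, L x ∂lam + ∫⁻ x in {x | g x = 0}ᶜ, L x ∂lam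
          = ∫⁻ x, L x ∂lam := lintegral_add_compl L ht
      have : ∫⁻ x in {x | g x = 0}, L x ∂lam + 1 ≤ 0 + 1 := by
        rw [hcompl] at hsum; rw [zero_add, hsum]; exact hfatou
      exact le_zero_iff.1 (ENNReal.le_of_add_le_add_right ENNReal.one_ne_top this)
    have hL0 : ∀ᵐ x ∂lam, g x = 0 → L x = 0 := by
      have := (lintegral_eq_zero_iff hLmeas).1 hzero
      exact (ae_restrict_iff' ht).1 this
    filter_upwards [hL1, hL0] with x h1 h0
    by_cases hx0 : g x = 0
    · show L x = g x
      rw [h0 hx0, hx0]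
    · exact h1 hx0
end

section
/- Let X₁, X₂, …, X be random elements in a measurable space (E, 𝓔) with distributions Pₙ and P having densities fₙ and f with respect to a σ-finite measure λ. Then liminf_{n→∞} fₙ = f λ-a.e. if and only if there exists a coupling (X̂₁, X̂₂, …, X̂) of X₁, X₂, …, X and an ℕ-valued random variable N such that almost surely X̂ₙ = X̂ for all n ≥ N. -/
open MeasureTheory Filter Set
open scoped ENNReal


theorem backward_aux {E : Type} [MeasurableSpace E]
    (lam : Measure E) [SigmaFinite lam]
    (Pn : ℕ → Measure E) (P : Measure E)
    [∀ n, IsProbabilityMeasure (Pn n)] [IsProbabilityMeasure P]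
    (f : ℕ → E → ℝ≥0∞) (g : E → ℝ≥0∞)
    (hf : ∀ n, Measurable (f n)) (hg : Measurable g)
    (hPn : ∀ n, Pn n = lam.withDensity (f n)) (hP : P = lam.withDensity g)
    {Ω : Type} [MeasurableSpace Ω] (Pr : Measure Ω)
    (hPr : IsProbabilityMeasure Pr)
    (X : ℕ → Ω → E) (X' : Ω → E) (N : Ω → ℕ)
    (hX : ∀ n, Measurable (X n)) (hX' : Measurable X') (hN : Measurable N)
    (hmX : ∀ n, Pr.map (X n) = Pn n) (hmX' : Pr.map X' = P)
    (hae : ∀ᵐ ω ∂Pr, ∀ n, N ω ≤ n → X n ω = X' ω) :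
    ∀ᵐ x ∂lam, liminf (fun n => f n x) atTop = g x := by
  -- basic integrals
  have hgint : ∫⁻ x, g x ∂lam = 1 := by
    have := measure_univ (μ := P)
    rwa [hP, withDensity_apply _ MeasurableSet.univ, setLIntegral_univ] at this
  have hfint : ∀ n, ∫⁻ x, f n x ∂lam = 1 := by
    intro n
    have := measure_univ (μ := Pn n)
    rwa [hPn, withDensity_apply _ MeasurableSet.univ, setLIntegral_univ] at this
  -- the "caught-up" measures
  set s : ℕ → Set Ω := fun n => {ω | N ω ≤ n} with hs
  have hsm : ∀ n, MeasurableSet (s n) := fun n => hN measurableSet_Iic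
  set Q : ℕ → Measure E := fun n => (Pr.restrict (s n)).map X' with hQ
  have hQXn : ∀ n, Q n = (Pr.restrict (s n)).map (X n) := by
    intro n
    refine Measure.map_congr ((ae_restrict_iff' (hsm n)).2 ?_)
    filter_upwards [hae] with ω hω hωs
    exact (hω n hωs).symm
  have hQle : ∀ n, Q n ≤ Pn n := by
    intro n
    rw [hQXn n, ← hmX n]
    exact Measure.map_mono Measure.restrict_le_self (hX n)
  have hQmono : Monotone Q := by
    intro a b hab
    exact Measure.map_mono (Measure.restrict_mono (fun ω hω => le_trans hω hab) le_rfl) hX'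
  have hQapp : ∀ n, ∀ A : Set E, MeasurableSet A → Q n A = Pr (X' ⁻¹' A ∩ s n) := by
    intro n A hA
    rw [hQ, Measure.map_apply hX' hA, Measure.restrict_apply (hX' hA)]
  have hQsup : ∀ A : Set E, MeasurableSet A → (⨆ n, Q n A) = P A := by
    intro A hA
    have hdir : Directed (· ⊆ ·) fun n => X' ⁻¹' A ∩ s n := by
      intro a b
      refine ⟨max a b, inter_subset_inter_right _ (fun ω hω => le_trans hω (le_max_left a b)),
        inter_subset_inter_right _ (fun ω hω => le_trans hω (le_max_right a b))⟩
    have hU : (⋃ n, X' ⁻¹' A ∩ s n) = X' ⁻¹' A := by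
      rw [← inter_iUnion]
      have : (⋃ n, s n) = univ := by
        ext ω; simp only [mem_iUnion, mem_univ, iff_true]
        exact ⟨N ω, show N ω ≤ N ω from le_rfl⟩
      rw [this, inter_univ]
    calc (⨆ n, Q n A) = ⨆ n, Pr (X' ⁻¹' A ∩ s n) := by
          simp_rw [fun n => hQapp n A hA]
      _ = Pr (⋃ n, X' ⁻¹' A ∩ s n) := (hdir.measure_iUnion).symm
      _ = P A := by rw [hU, ← hmX', Measure.map_apply hX' hA]
  haveI hQfin : ∀ n, IsFiniteMeasure (Q n) := fun n => isFiniteMeasure_of_le (Pn n) (hQle n)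
  have hQac : ∀ n, Q n ≪ lam := by
    intro n
    refine Measure.absolutelyContinuous_of_le (hQle n) |>.trans ?_
    rw [hPn n]
    exact withDensity_absolutelyContinuous lam (f n)
  set q : ℕ → E → ℝ≥0∞ := fun n => (Q n).rnDeriv lam with hq
  have hqm : ∀ n, Measurable (q n) := fun n => Measure.measurable_rnDeriv _ _
  have hQd : ∀ n, lam.withDensity (q n) = Q n := fun n =>
    Measure.withDensity_rnDeriv_eq _ _ (hQac n)
  have hqint : ∀ n, ∀ A : Set E, MeasurableSet A → ∫⁻ x in A, q n x ∂lam = Q n A := by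
    intro n A hA
    rw [← hQd n, withDensity_apply _ hA]
  -- q n ≤ f n a.e.
  have hqf : ∀ n, q n ≤ᵐ[lam] f n := by
    intro n
    refine ae_le_of_forall_setLIntegral_le_of_sigmaFinite (hqm n) ?_
    intro A hA _
    rw [hqint n A hA]
    calc Q n A ≤ Pn n A := hQle n A
      _ = ∫⁻ x in A, f n x ∂lam := by rw [hPn n, withDensity_apply _ hA]
  -- q monotone a.e.
  have hqmono : ∀ n, q n ≤ᵐ[lam] q (n + 1) := by
    intro n
    refine ae_le_of_forall_setLIntegral_le_of_sigmaFinite (hqm n) ?_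
    intro A hA _
    rw [hqint n A hA, hqint (n + 1) A hA]
    exact hQmono (Nat.le_succ n) A
  have hqmono' : ∀ᵐ x ∂lam, Monotone fun n => q n x := by
    rw [show (fun x => Monotone fun n => q n x) = fun x => ∀ n, q n x ≤ q (n+1) x from ?_]
    · exact ae_all_iff.2 hqmono
    · ext x
      exact ⟨fun h n => h (Nat.le_succ n), monotone_nat_of_le_succ⟩
  -- sup of q is g a.e.
  have hsupq : (fun x => ⨆ n, q n x) =ᵐ[lam] g := by
    refine ae_eq_of_forall_setLIntegral_eq_of_sigmaFinite (Measurable.iSup hqm) hg ?_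
    intro A hA _
    rw [show ∫⁻ x in A, g x ∂lam = P A from by rw [hP, withDensity_apply _ hA]]
    rw [← hQsup A hA]
    rw [lintegral_iSup' (fun n => (hqm n).aemeasurable) (ae_restrict_of_ae hqmono')]
    congr 1
    ext n
    exact hqint n A hA
  -- g ≤ liminf f a.e.
  have hg_le : ∀ᵐ x ∂lam, g x ≤ liminf (fun n => f n x) atTop := by
    filter_upwards [hsupq, hqmono', ae_all_iff.2 hqf] with x h1 h2 h3
    have hlim : Tendsto (fun n => q n x) atTop (nhds (⨆ n, q n x)) := tendsto_atTop_iSup h2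
    calc g x = ⨆ n, q n x := h1.symm
      _ = liminf (fun n => q n x) atTop := hlim.liminf_eq.symm
      _ ≤ liminf (fun n => f n x) atTop :=
        liminf_le_liminf (Eventually.of_forall fun n => h3 n)
  -- Fatou gives the converse on integrals
  have hfatou : ∫⁻ x, liminf (fun n => f n x) atTop ∂lam ≤ 1 := by
    calc ∫⁻ x, liminf (fun n => f n x) atTop ∂lam
        ≤ liminf (fun n => ∫⁻ x, f n x ∂lam) atTop := lintegral_liminf_le hf
      _ = 1 := by simp_rw [hfint]; exact liminf_const 1
  have : g =ᵐ[lam] fun x => liminf (fun n => f n x) atTop := by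
    refine ae_eq_of_ae_le_of_lintegral_le hg_le (by rw [hgint]; exact ENNReal.one_ne_top) ?_ ?_
    · exact (Measurable.liminf fun n => hf n).aemeasurable
    · rw [hgint]; exact hfatou
  filter_upwards [this] with x hx using hx.symm


section ForwardDefs
variable {E : Type} [MeasurableSpace E]

/-- `gP f g n x = (⨅ k ≥ n, f k x) ⊓ g x`. -/
noncomputable def gP (f : ℕ → E → ℝ≥0∞) (g : E → ℝ≥0∞) (n : ℕ) (x : E) : ℝ≥0∞ :=
  (⨅ k, ⨅ _ : k ≥ n, f k x) ⊓ g x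

/-- successive differences of `gP`. -/
noncomputable def dP (f : ℕ → E → ℝ≥0∞) (g : E → ℝ≥0∞) : ℕ → E → ℝ≥0∞
  | 0 => gP f g 0
  | (n + 1) => fun x => gP f g (n + 1) x - gP f g n x

variable {f : ℕ → E → ℝ≥0∞} {g : E → ℝ≥0∞}

lemma gP_measurable (hf : ∀ n, Measurable (f n)) (hg : Measurable g) (n : ℕ) :
    Measurable (gP f g n) := by
  apply Measurable.min _ hg
  exact Measurable.iInf fun k => Measurable.iInf fun _ => hf k

lemma gP_mono (x : E) : Monotone fun n => gP f g n x := by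
  refine monotone_nat_of_le_succ fun n => ?_
  refine inf_le_inf_right (g x) ?_
  exact le_iInf₂ fun k hk => iInf₂_le k (Nat.le_of_succ_le hk)

lemma gP_le_f (n : ℕ) (x : E) : gP f g n x ≤ f n x :=
  le_trans inf_le_left (iInf₂_le n le_rfl)

lemma gP_le_g (n : ℕ) (x : E) : gP f g n x ≤ g x := inf_le_right

lemma dP_measurable (hf : ∀ n, Measurable (f n)) (hg : Measurable g) (m : ℕ) :
    Measurable (dP f g m) := by
  cases m with
  | zero => exact gP_measurable hf hg 0
  | succ n => exact (gP_measurable hf hg (n + 1)).sub (gP_measurable hf hg n)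

lemma dP_le_g (m : ℕ) (x : E) : dP f g m x ≤ g x := by
  cases m with
  | zero => exact gP_le_g 0 x
  | succ n => exact le_trans tsub_le_self (gP_le_g (n + 1) x)

lemma sum_dP (n : ℕ) (x : E) :
    ∑ m ∈ Finset.range (n + 1), dP f g m x = gP f g n x := by
  induction n with
  | zero => simp [dP]
  | succ n ih =>
      rw [Finset.sum_range_succ, ih]
      exact add_tsub_cancel_of_le (gP_mono x (Nat.le_succ n))

lemma tsum_dP (x : E) : ∑' m, dP f g m x = ⨆ n, gP f g n x := by
  rw [ENNReal.tsum_eq_iSup_nat]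
  apply le_antisymm
  · refine iSup_le fun n => ?_
    cases n with
    | zero => simp
    | succ n => rw [sum_dP n x]; exact le_iSup (fun n => gP f g n x) n
  · refine iSup_le fun n => ?_
    calc gP f g n x = ∑ m ∈ Finset.range (n + 1), dP f g m x := (sum_dP n x).symm
      _ ≤ ⨆ k, ∑ m ∈ Finset.range k, dP f g m x :=
          le_iSup (fun k => ∑ m ∈ Finset.range k, dP f g m x) (n + 1)

end ForwardDefs


section CouplingDefs
variable {E : Type}

/-- glue a finite vector and a tail value into a sequence, tagged with the level. -/
def PsiC (m : ℕ) (p : (Fin m → E) × E) : ℕ × (ℕ → E) :=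
  (m, fun n => if h : n < m then p.1 ⟨n, h⟩ else p.2)

/-- the coupled random elements. -/
def XC (n : ℕ) (ω : ℕ × (ℕ → E)) : E := if ω.1 ≤ n then ω.2 ω.1 else ω.2 n

/-- the limiting random element. -/
def XC' (ω : ℕ × (ℕ → E)) : E := ω.2 ω.1

lemma XC_eq {n : ℕ} {ω : ℕ × (ℕ → E)} (hn : ω.1 ≤ n) : XC n ω = XC' ω := if_pos hn

lemma XC'_comp_PsiC (m : ℕ) : (XC' ∘ PsiC m : (Fin m → E) × E → E) = Prod.snd := by
  funext p
  simp only [Function.comp_apply, XC', PsiC]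
  rw [dif_neg (lt_irrefl m)]

lemma XC_comp_PsiC_le {m n : ℕ} (h : m ≤ n) :
    (XC n ∘ PsiC m : (Fin m → E) × E → E) = Prod.snd := by
  funext p
  simp only [Function.comp_apply, XC, PsiC]
  simp [h]

lemma XC_comp_PsiC_gt {m n : ℕ} (h : n < m) :
    (XC n ∘ PsiC m : (Fin m → E) × E → E) = fun p => p.1 ⟨n, h⟩ := by
  funext p
  simp only [Function.comp_apply, XC, PsiC]
  simp [not_le.2 h, h]

variable [MeasurableSpace E]

lemma measurable_PsiC (m : ℕ) : Measurable (PsiC (E := E) m) := by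
  refine measurable_const.prodMk (measurable_pi_lambda _ fun n => ?_)
  by_cases h : n < m
  · simp only [dif_pos h]
    exact (measurable_pi_apply _).comp measurable_fst
  · simp only [dif_neg h]
    exact measurable_snd

lemma measurable_XC' : Measurable (XC' (E := E)) := by
  have h1 : Measurable fun q : (ℕ → E) × ℕ => q.1 q.2 :=
    measurable_from_prod_countable_left fun m => measurable_pi_apply m
  exact h1.comp measurable_swap

lemma measurable_XC (n : ℕ) : Measurable (XC (E := E) n) := by
  have h1 : Measurable fun q : (ℕ → E) × ℕ => if q.2 ≤ n then q.1 q.2 else q.1 n := by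
    refine measurable_from_prod_countable_left fun m => ?_
    by_cases h : m ≤ n
    · simp only [if_pos h]
      exact measurable_pi_apply m
    · simp only [if_neg h]
      exact measurable_pi_apply n
  exact h1.comp measurable_swap

lemma map_eval_pi' (rho : ℕ → Measure E) [∀ n, IsProbabilityMeasure (rho n)]
    (m : ℕ) (i : Fin m) :
    (Measure.pi fun j : Fin m => rho (j : ℕ)).map (fun v => v i) = rho (i : ℕ) := by
  ext A hA
  rw [Measure.map_apply (measurable_pi_apply i) hA]
  have hpre : (fun v : Fin m → E => v i) ⁻¹' A
      = Set.pi univ (Function.update (fun _ => (univ : Set E)) i A) := by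
    ext v
    simp only [mem_preimage, mem_univ_pi]
    constructor
    · intro hv j
      rcases eq_or_ne j i with rfl | hj
      · rwa [Function.update_self]
      · rw [Function.update_of_ne hj]
        exact mem_univ _
    · intro hv
      have := hv i
      rwa [Function.update_self] at this
  rw [hpre, Measure.pi_pi]
  rw [Finset.prod_eq_single i ?_ ?_]
  · rw [Function.update_self]
  · intro j _ hj
    rw [Function.update_of_ne hj]
    exact measure_univ
  · intro hi
    exact absurd (Finset.mem_univ i) hi

end CouplingDefs

theorem forward_aux {E : Type} [MeasurableSpace E]
    (lam : Measure E) [SigmaFinite lam]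
    (Pn : ℕ → Measure E) (P : Measure E)
    [∀ n, IsProbabilityMeasure (Pn n)] [IsProbabilityMeasure P]
    (f : ℕ → E → ℝ≥0∞) (g : E → ℝ≥0∞)
    (hf : ∀ n, Measurable (f n)) (hg : Measurable g)
    (hPn : ∀ n, Pn n = lam.withDensity (f n)) (hP : P = lam.withDensity g)
    (h : ∀ᵐ x ∂lam, liminf (fun n => f n x) atTop = g x) :
    ∃ (Ω : Type) (_ : MeasurableSpace Ω) (Pr : Measure Ω),
        IsProbabilityMeasure Pr ∧
        ∃ (X : ℕ → Ω → E) (X' : Ω → E) (N : Ω → ℕ),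
          (∀ n, Measurable (X n)) ∧ Measurable X' ∧ Measurable N ∧
          (∀ n, Pr.map (X n) = Pn n) ∧ Pr.map X' = P ∧
          (∀ᵐ ω ∂Pr, ∀ n, N ω ≤ n → X n ω = X' ω) := by
  have hgint : ∫⁻ x, g x ∂lam = 1 := by
    have := measure_univ (μ := P)
    rwa [hP, withDensity_apply _ MeasurableSet.univ, setLIntegral_univ] at this
  have hfint : ∀ n, ∫⁻ x, f n x ∂lam = 1 := by
    intro n
    have := measure_univ (μ := Pn n)
    rwa [hPn, withDensity_apply _ MeasurableSet.univ, setLIntegral_univ] at this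
  -- key pointwise identity from the hypothesis
  have hkey : ∀ᵐ x ∂lam, (∑' m, dP f g m x) = g x := by
    filter_upwards [h] with x hx
    rw [tsum_dP x]
    refine le_antisymm (iSup_le fun n => gP_le_g n x) ?_
    have : (⨆ n, gP f g n x) = liminf (fun n => f n x) atTop ⊓ g x := by
      rw [liminf_eq_iSup_iInf_of_nat, iSup_inf_eq]
      rfl
    rw [this, hx, inf_idem]
  -- the measures ν m
  set ν : ℕ → Measure E := fun m => lam.withDensity (dP f g m) with hν
  have hνapp : ∀ m, ∀ A : Set E, MeasurableSet A → ν m A = ∫⁻ x in A, dP f g m x ∂lam :=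
    fun m A hA => withDensity_apply _ hA
  haveI hνfin : ∀ m, IsFiniteMeasure (ν m) := by
    intro m
    refine ⟨?_⟩
    rw [hνapp m univ MeasurableSet.univ, setLIntegral_univ]
    calc ∫⁻ x, dP f g m x ∂lam ≤ ∫⁻ x, g x ∂lam := lintegral_mono fun x => dP_le_g m x
      _ = 1 := hgint
      _ < ⊤ := ENNReal.one_lt_top
  have hsumν : Measure.sum ν = P := by
    ext A hA
    rw [Measure.sum_apply _ hA, hP, withDensity_apply _ hA]
    calc ∑' m, ν m A = ∑' m, ∫⁻ x in A, dP f g m x ∂lam := by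
          congr 1; ext m; exact hνapp m A hA
      _ = ∫⁻ x in A, ∑' m, dP f g m x ∂lam :=
          (lintegral_tsum fun m => (dP_measurable hf hg m).aemeasurable).symm
      _ = ∫⁻ x in A, g x ∂lam := lintegral_congr_ae (ae_restrict_of_ae hkey)
  -- partial sums of ν
  have hνpart : ∀ n, ∀ A : Set E, MeasurableSet A →
      ∑ m ∈ Finset.range (n + 1), ν m A = lam.withDensity (gP f g n) A := by
    intro n A hA
    rw [withDensity_apply _ hA]
    calc ∑ m ∈ Finset.range (n + 1), ν m A
        = ∑ m ∈ Finset.range (n + 1), ∫⁻ x in A, dP f g m x ∂lam :=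
          Finset.sum_congr rfl fun m _ => hνapp m A hA
      _ = ∫⁻ x in A, ∑ m ∈ Finset.range (n + 1), dP f g m x ∂lam :=
          (lintegral_finset_sum _ fun m _ => dP_measurable hf hg m).symm
      _ = ∫⁻ x in A, gP f g n x ∂lam := by
          refine lintegral_congr fun x => ?_
          exact sum_dP n x
  -- the total masses
  set β : ℕ → ℝ≥0∞ := fun n => ∫⁻ x, gP f g n x ∂lam with hβ
  have hβle : ∀ n, β n ≤ 1 := by
    intro n
    rw [← hgint]
    exact lintegral_mono fun x => gP_le_g n x
  have hβtop : ∀ n, β n ≠ ⊤ := fun n => (lt_of_le_of_lt (hβle n) ENNReal.one_lt_top).ne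
  have hWint : ∀ n, ∫⁻ x, (f n x - gP f g n x) ∂lam = 1 - β n := by
    intro n
    rw [lintegral_sub (gP_measurable hf hg n) (show (∫⁻ x, gP f g n x ∂lam) ≠ ⊤ from hβtop n)
      (ae_of_all _ fun x => gP_le_f n x), hfint n]
  -- the residual probability measures ρ n
  set ρ : ℕ → Measure E := fun n =>
    if β n = 1 then P
    else (1 - β n)⁻¹ • lam.withDensity (fun x => f n x - gP f g n x) with hρ
  have hρdef : ∀ n, ρ n = if β n = 1 then P
      else (1 - β n)⁻¹ • lam.withDensity (fun x => f n x - gP f g n x) := by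
    intro n; rw [hρ]
  haveI hρprob : ∀ n, IsProbabilityMeasure (ρ n) := by
    intro n
    rw [hρdef n]
    split_ifs with hb
    · infer_instance
    · have hblt : β n < 1 := lt_of_le_of_ne (hβle n) hb
      refine ⟨?_⟩
      rw [Measure.smul_apply, withDensity_apply _ MeasurableSet.univ, setLIntegral_univ,
        hWint n, smul_eq_mul]
      exact ENNReal.inv_mul_cancel (by simpa [tsub_eq_zero_iff_le] using hblt.not_ge)
        (ne_top_of_le_ne_top ENNReal.one_ne_top tsub_le_self)
  -- the mixture identity
  have hmix : ∀ n, lam.withDensity (gP f g n) + (1 - β n) • ρ n = Pn n := by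
    intro n
    by_cases hb : β n = 1
    · have hfg : gP f g n =ᵐ[lam] f n := by
        have h0 : ∫⁻ x, (f n x - gP f g n x) ∂lam = 0 := by
          rw [hWint n, hb, tsub_self]
        have := (lintegral_eq_zero_iff ((hf n).sub (gP_measurable hf hg n))).1 h0
        filter_upwards [this] with x hx
        exact le_antisymm (gP_le_f n x) (tsub_eq_zero_iff_le.1 hx)
      rw [hb, tsub_self, zero_smul, add_zero, hPn n]
      exact withDensity_congr_ae hfg
    · rw [hρdef n, if_neg hb]
      rw [smul_smul, ENNReal.mul_inv_cancel
          (by simpa [tsub_eq_zero_iff_le] using (lt_of_le_of_ne (hβle n) hb).not_ge)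
          (ne_top_of_le_ne_top ENNReal.one_ne_top tsub_le_self), one_smul,
        ← withDensity_add_right _ (g := fun x => f n x - gP f g n x) ((hf n).sub (gP_measurable hf hg n)), hPn n]
      refine withDensity_congr_ae (ae_of_all _ fun x => ?_)
      exact add_tsub_cancel_of_le (gP_le_f n x)
  -- total mass of the ν's
  have hctot : ∑' m, ν m univ = 1 := by
    rw [← Measure.sum_apply _ MeasurableSet.univ, hsumν]
    exact measure_univ
  -- probability structure on the product components
  haveI hπ : ∀ m : ℕ, IsProbabilityMeasure (Measure.pi fun i : Fin m => ρ (i : ℕ)) := by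
    intro m
    haveI : ∀ i : Fin m, IsProbabilityMeasure (ρ (i : ℕ)) := fun i => hρprob i
    infer_instance
  -- the coupling measure
  set Pr : Measure (ℕ × (ℕ → E)) :=
    Measure.sum (fun m => ((Measure.pi fun i : Fin m => ρ (i : ℕ)).prod (ν m)).map (PsiC m))
    with hPrdef
  have hτuniv : ∀ m : ℕ, ((Measure.pi fun i : Fin m => ρ (i : ℕ)).prod (ν m)) univ = ν m univ := by
    intro m
    rw [show (univ : Set ((Fin m → E) × E)) = univ ×ˢ univ from (univ_prod_univ).symm,
      Measure.prod_prod, measure_univ, one_mul]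
  have hmapsnd : ∀ m : ℕ,
      ((Measure.pi fun i : Fin m => ρ (i : ℕ)).prod (ν m)).map Prod.snd = ν m := by
    intro m
    rw [Measure.map_snd_prod, measure_univ, one_smul]
  haveI hPrprob : IsProbabilityMeasure Pr := by
    refine ⟨?_⟩
    rw [hPrdef, Measure.sum_apply _ MeasurableSet.univ]
    calc ∑' m, (((Measure.pi fun i : Fin m => ρ (i : ℕ)).prod (ν m)).map (PsiC m)) univ
        = ∑' m, ν m univ := by
          refine tsum_congr fun m => ?_
          rw [Measure.map_apply (measurable_PsiC m) MeasurableSet.univ, preimage_univ, hτuniv m]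
      _ = 1 := hctot
  -- marginal of the limit variable
  have hmapX' : Pr.map XC' = P := by
    calc Pr.map XC'
        = Measure.sum fun m =>
            ((((Measure.pi fun i : Fin m => ρ (i : ℕ)).prod (ν m)).map (PsiC m)).map XC') :=
          Measure.map_sum measurable_XC'.aemeasurable
      _ = Measure.sum ν := by
          congr 1
          funext m
          rw [Measure.map_map measurable_XC' (measurable_PsiC m), XC'_comp_PsiC m, hmapsnd m]
      _ = P := hsumν
  -- marginals of the approximating variables
  have hmapXn : ∀ n, Pr.map (XC n) = Pn n := by
    intro n
    have hterm : ∀ m, ((((Measure.pi fun i : Fin m => ρ (i : ℕ)).prod (ν m)).map (PsiC m)).map (XC n)) =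
        if m ≤ n then ν m else (ν m univ) • ρ n := by
      intro m
      rw [Measure.map_map (measurable_XC n) (measurable_PsiC m)]
      by_cases hmn : m ≤ n
      · rw [if_pos hmn, XC_comp_PsiC_le hmn, hmapsnd m]
      · have hlt : n < m := not_le.1 hmn
        rw [if_neg hmn, XC_comp_PsiC_gt hlt]
        have hcm : (fun p : (Fin m → E) × E => p.1 ⟨n, hlt⟩)
            = (fun v : Fin m → E => v ⟨n, hlt⟩) ∘ Prod.fst := rfl
        haveI : ∀ k : ℕ, IsProbabilityMeasure (ρ k) := hρprob
        rw [hcm, ← Measure.map_map (measurable_pi_apply _) measurable_fst,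
          Measure.map_fst_prod, Measure.map_smul, map_eval_pi' ρ m ⟨n, hlt⟩]
    have hfirstsum : ∀ A : Set E, MeasurableSet A →
        (∑' m, if m ≤ n then ν m A else 0) = lam.withDensity (gP f g n) A := by
      intro A hA
      rw [tsum_eq_sum (s := Finset.range (n + 1))
        (fun m hm => if_neg fun h => hm (Finset.mem_range.2 (Nat.lt_succ_of_le h)))]
      rw [← hνpart n A hA]
      exact Finset.sum_congr rfl fun m hm =>
        if_pos (Nat.lt_succ_iff.1 (Finset.mem_range.1 hm))
    have hβuniv : lam.withDensity (gP f g n) univ = β n := by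
      rw [withDensity_apply _ MeasurableSet.univ, setLIntegral_univ]
    have htail : (∑' m, if m ≤ n then 0 else ν m univ) = 1 - β n := by
      have hsplit : (∑' m, if m ≤ n then ν m univ else 0)
          + (∑' m, if m ≤ n then 0 else ν m univ) = 1 := by
        rw [← ENNReal.tsum_add]
        calc ∑' m, ((if m ≤ n then ν m univ else 0) + if m ≤ n then 0 else ν m univ)
            = ∑' m, ν m univ := tsum_congr fun m => by split_ifs <;> simp
          _ = 1 := hctot
      rw [hfirstsum univ MeasurableSet.univ, hβuniv] at hsplit
      exact ENNReal.eq_sub_of_add_eq (hβtop n) (by rw [add_comm]; exact hsplit)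
    ext A hA
    rw [hPrdef, Measure.map_sum (measurable_XC n).aemeasurable, Measure.sum_apply _ hA]
    calc ∑' m, ((((Measure.pi fun i : Fin m => ρ (i : ℕ)).prod (ν m)).map (PsiC m)).map (XC n)) A
        = ∑' m, ((if m ≤ n then ν m A else 0) + (if m ≤ n then 0 else ν m univ) * ρ n A) := by
          refine tsum_congr fun m => ?_
          rw [hterm m]
          split_ifs with hmn
          · simp
          · simp [Measure.smul_apply, smul_eq_mul]
      _ = (∑' m, if m ≤ n then ν m A else 0)
            + (∑' m, if m ≤ n then 0 else ν m univ) * ρ n A := by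
          rw [ENNReal.tsum_add, ENNReal.tsum_mul_right]
      _ = lam.withDensity (gP f g n) A + (1 - β n) * ρ n A := by
          rw [hfirstsum A hA, htail]
      _ = Pn n A := by
          rw [← hmix n]
          simp [Measure.add_apply, Measure.smul_apply, smul_eq_mul]
  exact ⟨ℕ × (ℕ → E), inferInstance, Pr, hPrprob, XC, XC', Prod.fst,
    measurable_XC, measurable_XC', measurable_fst, hmapXn, hmapX',
    ae_of_all _ fun ω n hn => XC_eq hn⟩


/-- Convergence in density (`liminf fₙ = f` `λ`-a.e.) holds iff there exists a
coupling `(X̂₁, X̂₂, …, X̂)` of `X₁, X₂, …, X` and an `ℕ`-valued random variable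
`N` such that almost surely `X̂ₙ = X̂` for all `n ≥ N`. -/
theorem stmt5 {E : Type} [MeasurableSpace E]
    (lam : Measure E) [SigmaFinite lam]
    (Pn : ℕ → Measure E) (P : Measure E)
    [∀ n, IsProbabilityMeasure (Pn n)] [IsProbabilityMeasure P]
    (f : ℕ → E → ℝ≥0∞) (g : E → ℝ≥0∞)
    (hf : ∀ n, Measurable (f n)) (hg : Measurable g)
    (hPn : ∀ n, Pn n = lam.withDensity (f n)) (hP : P = lam.withDensity g) :
    (∀ᵐ x ∂lam, liminf (fun n => f n x) atTop = g x) ↔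
      ∃ (Ω : Type) (_ : MeasurableSpace Ω) (Pr : Measure Ω),
        IsProbabilityMeasure Pr ∧
        ∃ (X : ℕ → Ω → E) (X' : Ω → E) (N : Ω → ℕ),
          (∀ n, Measurable (X n)) ∧ Measurable X' ∧ Measurable N ∧
          (∀ n, Pr.map (X n) = Pn n) ∧ Pr.map X' = P ∧
          (∀ᵐ ω ∂Pr, ∀ n, N ω ≤ n → X n ω = X' ω) := by
  constructor
  · exact forward_aux lam Pn P f g hf hg hPn hP
  · rintro ⟨Ω, mΩ, Pr, hPr, X, X', N, hX, hX', hN, hmX, hmX', hae⟩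
    exact backward_aux lam Pn P f g hf hg hPn hP Pr hPr X X' N hX hX' hN hmX hmX' hae
end

section
/- Let Q and ν₁, ν₂, … be finite measures on a measurable space with νₙ ≤ Q and Q − νₙ ≤ 2^{-n} (as measures, i.e., (Q − νₙ)(A) ≤ 2^{-n} for all measurable A, in fact total mass bound Q(E) − νₙ(E) ≤ 2^{-n}). Let hₙ = dνₙ/dQ and let μₙ be the measure with density inf_{i ≥ n} hᵢ with respect to Q. Then 0 ≤ Q − μₙ and (Q − μₙ)(E) ≤ 2^{-n+1}; in particular μ₁ ≤ μ₂ ≤ … and μₙ(A) ↑ Q(A) for every measurable set A. -/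
open MeasureTheory Filter
open scoped ENNReal

/-- If `νₙ ≤ Q` with `Q(E) − νₙ(E) ≤ 2⁻ⁿ`, and `μₙ` has density `inf_{i ≥ n} dνᵢ/dQ`
with respect to `Q`, then `μₙ ≤ Q`, `(Q − μₙ)(E) ≤ 2^{-n+1}`, the `μₙ` increase,
and `μₙ(A) ↑ Q(A)` for every measurable `A`. -/
theorem stmt6 {E : Type*} [MeasurableSpace E]
    (Q : Measure E) [IsProbabilityMeasure Q]
    (ν : ℕ → Measure E)
    (hle : ∀ n, ∀ A : Set E, MeasurableSet A → ν n A ≤ Q A)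
    (hmass : ∀ n, Q Set.univ ≤ ν n Set.univ + 2⁻¹ ^ n)
    (μ : ℕ → Measure E)
    (hμ : ∀ n, μ n = Q.withDensity (fun x => ⨅ i : {i : ℕ // n ≤ i}, ((ν i).rnDeriv Q) x)) :
    (∀ n, ∀ A : Set E, MeasurableSet A → μ n A ≤ Q A) ∧
    (∀ n, Q Set.univ ≤ μ n Set.univ + 2 * 2⁻¹ ^ n) ∧
    (∀ n, ∀ A : Set E, MeasurableSet A → μ n A ≤ μ (n + 1) A) ∧
    (∀ A : Set E, MeasurableSet A → Tendsto (fun n => μ n A) atTop (nhds (Q A))) := by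
  -- notation
  set h : ℕ → E → ℝ≥0∞ := fun i x => ((ν i).rnDeriv Q) x with hh
  set f : ℕ → E → ℝ≥0∞ := fun n x => ⨅ i : {i : ℕ // n ≤ i}, h i x with hf
  have hle' : ∀ n, ν n ≤ Q := fun n => Measure.le_iff.mpr (hle n)
  have hfin : ∀ n, IsFiniteMeasure (ν n) := fun n =>
    ⟨lt_of_le_of_lt (hle n _ MeasurableSet.univ) (measure_lt_top Q _)⟩
  have hac : ∀ n, ν n ≪ Q := fun n => Measure.absolutelyContinuous_of_le (hle' n)
  have hmeas_h : ∀ i, Measurable (h i) := fun i => Measure.measurable_rnDeriv _ _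
  have hmeas_f : ∀ n, Measurable (f n) := fun n => Measurable.iInf fun i => hmeas_h i
  have h_le_one : ∀ i, h i ≤ᵐ[Q] 1 := fun i => Measure.rnDeriv_le_one_of_le (hle' i)
  -- f n ≤ h i for each i ≥ n
  have hf_le : ∀ n (i : {i : ℕ // n ≤ i}), ∀ x, f n x ≤ h i x := fun n i x => iInf_le _ i
  -- part 1
  have part1 : ∀ n, ∀ A : Set E, MeasurableSet A → μ n A ≤ Q A := by
    intro n A hA
    rw [hμ n, withDensity_apply _ hA]
    calc ∫⁻ x in A, f n x ∂Q ≤ ∫⁻ x in A, h n x ∂Q :=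
          lintegral_mono fun x => hf_le n ⟨n, le_refl n⟩ x
      _ = ν n A := by
          haveI := hfin n
          exact Measure.setLIntegral_rnDeriv (hac n) A
      _ ≤ Q A := hle n A hA
  -- f n is monotone in n
  have hf_mono : ∀ n x, f n x ≤ f (n + 1) x := fun n x =>
    le_iInf fun i => iInf_le _ (⟨i.1, (Nat.le_succ n).trans i.2⟩ : {i : ℕ // n ≤ i})
  have part3 : ∀ n, ∀ A : Set E, MeasurableSet A → μ n A ≤ μ (n + 1) A := by
    intro n A hA
    rw [hμ n, hμ (n + 1), withDensity_apply _ hA, withDensity_apply _ hA]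
    exact lintegral_mono fun x => hf_mono n x
  -- key mass bound
  have hint_h : ∀ i, ∫⁻ x, h i x ∂Q = ν i Set.univ := by
    intro i
    haveI := hfin i
    exact Measure.lintegral_rnDeriv (hac i)
  have hone : ∀ i, ∫⁻ x, (1 - h i x) ∂Q ≤ 2⁻¹ ^ i := by
    intro i
    have hsub : ∫⁻ x, (1 - h i x) ∂Q = ∫⁻ _, (1 : ℝ≥0∞) ∂Q - ∫⁻ x, h i x ∂Q := by
      refine lintegral_sub (hmeas_h i) ?_ (h_le_one i)
      rw [hint_h i]
      exact (measure_lt_top _ _).ne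
    rw [hsub, lintegral_one, hint_h i]
    rw [measure_univ]
    have := hmass i
    rw [measure_univ] at this
    exact tsub_le_iff_left.mpr this
  have hsum : ∀ n, ∑' i : {i : ℕ // n ≤ i}, (2⁻¹ : ℝ≥0∞) ^ (i : ℕ) = 2 * 2⁻¹ ^ n := by
    intro n
    have key : ∑' k : ℕ, (2⁻¹ : ℝ≥0∞) ^ (n + k)
        = ∑' i : {i : ℕ // n ≤ i}, (2⁻¹ : ℝ≥0∞) ^ (i : ℕ) :=
      Equiv.tsum_eq (⟨fun k => ⟨n + k, Nat.le_add_right n k⟩, fun i => i.1 - n,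
        fun k => by simp, fun i => by ext; simp [Nat.add_sub_cancel' i.2]⟩ :
        ℕ ≃ {i : ℕ // n ≤ i}) (fun i : {i : ℕ // n ≤ i} => (2⁻¹ : ℝ≥0∞) ^ (i : ℕ))
    rw [← key]
    calc ∑' k : ℕ, (2⁻¹ : ℝ≥0∞) ^ (n + k)
        = ∑' k : ℕ, (2⁻¹ : ℝ≥0∞) ^ n * 2⁻¹ ^ k := by
          congr 1; funext k; rw [pow_add]
      _ = 2⁻¹ ^ n * ∑' k : ℕ, (2⁻¹ : ℝ≥0∞) ^ k := ENNReal.tsum_mul_left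
      _ = 2⁻¹ ^ n * 2 := by
          rw [ENNReal.tsum_geometric]
          norm_num
      _ = 2 * 2⁻¹ ^ n := mul_comm _ _
  have part2 : ∀ n, Q Set.univ ≤ μ n Set.univ + 2 * 2⁻¹ ^ n := by
    intro n
    have hsub_int : ∫⁻ x, (1 - f n x) ∂Q ≤ 2 * 2⁻¹ ^ n := by
      have hpt : ∀ x, (1 : ℝ≥0∞) - f n x = ⨆ i : {i : ℕ // n ≤ i}, (1 - h i x) := fun x =>
        ENNReal.sub_iInf
      calc ∫⁻ x, (1 - f n x) ∂Q
          = ∫⁻ x, ⨆ i : {i : ℕ // n ≤ i}, (1 - h i x) ∂Q := by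
            congr 1; funext x; exact hpt x
        _ ≤ ∫⁻ x, ∑' i : {i : ℕ // n ≤ i}, (1 - h i x) ∂Q := by
            refine lintegral_mono fun x => iSup_le fun i => ENNReal.le_tsum i
        _ = ∑' i : {i : ℕ // n ≤ i}, ∫⁻ x, (1 - h i x) ∂Q := by
            exact lintegral_tsum fun i => ((hmeas_h i.1).const_sub 1).aemeasurable
        _ ≤ ∑' i : {i : ℕ // n ≤ i}, (2⁻¹ : ℝ≥0∞) ^ (i : ℕ) :=
            ENNReal.tsum_le_tsum fun i => hone i.1
        _ = 2 * 2⁻¹ ^ n := hsum n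
    calc Q Set.univ = ∫⁻ _, (1 : ℝ≥0∞) ∂Q := by rw [lintegral_one]
      _ ≤ ∫⁻ x, (f n x + (1 - f n x)) ∂Q :=
          lintegral_mono fun x => le_add_tsub
      _ = ∫⁻ x, f n x ∂Q + ∫⁻ x, (1 - f n x) ∂Q :=
          lintegral_add_right _ ((hmeas_f n).const_sub 1)
      _ ≤ μ n Set.univ + 2 * 2⁻¹ ^ n := by
          rw [hμ n, withDensity_apply _ MeasurableSet.univ, Measure.restrict_univ]
          exact add_le_add le_rfl hsub_int
  refine ⟨part1, part2, part3, ?_⟩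
  -- part 4
  intro A hA
  have hQA : Q A ≠ ∞ := (measure_lt_top Q A).ne
  have hlb : ∀ n, Q A - 2 * 2⁻¹ ^ n ≤ μ n A := by
    intro n
    refine tsub_le_iff_right.mpr ?_
    -- Q A ≤ μ n A + 2 * 2⁻¹ ^ n
    have h1 : Q A + μ n Aᶜ ≤ μ n A + 2 * 2⁻¹ ^ n + μ n Aᶜ := by
      have key : Q A + μ n Aᶜ ≤ μ n Set.univ + 2 * 2⁻¹ ^ n := by
        calc Q A + μ n Aᶜ ≤ Q A + Q Aᶜ := add_le_add le_rfl (part1 n Aᶜ hA.compl)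
          _ = Q Set.univ := by rw [← measure_union (disjoint_compl_right) hA.compl,
              Set.union_compl_self]
          _ ≤ μ n Set.univ + 2 * 2⁻¹ ^ n := part2 n
      calc Q A + μ n Aᶜ ≤ μ n Set.univ + 2 * 2⁻¹ ^ n := key
        _ = μ n A + μ n Aᶜ + 2 * 2⁻¹ ^ n := by
            rw [← measure_union (disjoint_compl_right) hA.compl, Set.union_compl_self]
        _ = μ n A + 2 * 2⁻¹ ^ n + μ n Aᶜ := by ring
    have hfinc : μ n Aᶜ ≠ ∞ := ((part1 n Aᶜ hA.compl).trans_lt (measure_lt_top Q _)).ne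
    have h2 : μ n Aᶜ + Q A ≤ μ n Aᶜ + (μ n A + 2 * 2⁻¹ ^ n) := by
      rwa [add_comm (Q A), add_comm (μ n A + 2 * 2⁻¹ ^ n)] at h1
    exact (ENNReal.add_le_add_iff_left hfinc).mp h2
  have hub : ∀ n, μ n A ≤ Q A := fun n => part1 n A hA
  have htend : Tendsto (fun n => Q A - 2 * 2⁻¹ ^ n) atTop (nhds (Q A)) := by
    have h0 : Tendsto (fun n : ℕ => 2 * (2⁻¹ : ℝ≥0∞) ^ n) atTop (nhds 0) := by
      have : Tendsto (fun n : ℕ => (2⁻¹ : ℝ≥0∞) ^ n) atTop (nhds 0) :=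
        ENNReal.tendsto_pow_atTop_nhds_zero_of_lt_one (by norm_num)
      simpa using ENNReal.Tendsto.const_mul this (Or.inr (by norm_num))
    have := ENNReal.Tendsto.sub (tendsto_const_nhds (x := Q A)) h0 (Or.inl hQA)
    simpa using this
  exact tendsto_of_tendsto_of_tendsto_of_le_of_le htend tendsto_const_nhds hlb hub
end

section
/- Let Q be a probability measure on (E,𝓔), and ν₁, …, ν_m measures with νᵢ ≤ Q and densities hᵢ = dνᵢ/dQ. Let μ be the measure with density min_{1 ≤ i ≤ m} hᵢ with respect to Q. Then there exists a measurable partition A₁, …, A_m of E such that μ(B ∩ Aᵢ) = νᵢ(B ∩ Aᵢ) for all measurable B and each i, and consequently (Q − μ)(E) ≤ Σ_{i=1}^m (Q − νᵢ)(E). -/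
open MeasureTheory Filter
open scoped ENNReal

/-- If `ν₁, …, ν_m ≤ Q` and `μ` has density `min_i dνᵢ/dQ` w.r.t. `Q`, then there
is a measurable partition `A₁, …, A_m` of `E` with `μ(B ∩ Aᵢ) = νᵢ(B ∩ Aᵢ)` for
all measurable `B`, and consequently `(Q − μ)(E) ≤ Σᵢ (Q − νᵢ)(E)`. -/
theorem stmt8 {E : Type*} [MeasurableSpace E]
    (Q : Measure E) [IsProbabilityMeasure Q]
    (m : ℕ) (hm : 1 ≤ m) (ν : Fin m → Measure E)
    (hle : ∀ i, ∀ A : Set E, MeasurableSet A → ν i A ≤ Q A)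
    (μ : Measure E)
    (hμ : μ = Q.withDensity (fun x => ⨅ i : Fin m, ((ν i).rnDeriv Q) x)) :
    (∃ A : Fin m → Set E,
      (∀ i, MeasurableSet (A i)) ∧
      Pairwise (Function.onFun Disjoint A) ∧
      (⋃ i, A i) = Set.univ ∧
      (∀ i, ∀ B : Set E, MeasurableSet B → μ (B ∩ A i) = ν i (B ∩ A i))) ∧
    Q Set.univ ≤ μ Set.univ + ∑ i : Fin m, (Q Set.univ - ν i Set.univ) := by
  classical
  haveI : Nonempty (Fin m) := ⟨⟨0, hm⟩⟩
  haveI : ∀ i, IsFiniteMeasure (ν i) := fun i =>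
    ⟨lt_of_le_of_lt (hle i _ MeasurableSet.univ) (measure_lt_top Q _)⟩
  have hνle : ∀ i, ν i ≤ Q := fun i => Measure.le_iff.mpr (fun s hs => hle i s hs)
  have hac : ∀ i, ν i ≪ Q := fun i => Measure.absolutelyContinuous_of_le (hνle i)
  have hν : ∀ i, Q.withDensity ((ν i).rnDeriv Q) = ν i := fun i =>
    Measure.withDensity_rnDeriv_eq _ _ (hac i)
  set h : Fin m → E → ℝ≥0∞ := fun i => (ν i).rnDeriv Q with hh
  have hmeas : ∀ i, Measurable (h i) := fun i => Measure.measurable_rnDeriv _ _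
  set f : E → ℝ≥0∞ := fun x => ⨅ i, h i x with hf
  have hfmeas : Measurable f := Measurable.iInf hmeas
  have hfle : ∀ i x, f x ≤ h i x := fun i x => iInf_le _ i
  set B : Fin m → Set E := fun i => {x | h i x ≤ f x} with hB
  have hBmeas : ∀ i, MeasurableSet (B i) := fun i => measurableSet_le (hmeas i) hfmeas
  set A : Fin m → Set E := fun i => B i \ ⋃ j ∈ Set.Iio i, B j with hA
  have hAmeas : ∀ i, MeasurableSet (A i) := fun i =>
    (hBmeas i).diff (MeasurableSet.biUnion (Set.to_countable _) fun j _ => hBmeas j)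
  have hdisj : Pairwise (Function.onFun Disjoint A) := by
    intro i j hij
    rcases hij.lt_or_gt with h' | h'
    · exact Set.disjoint_left.mpr fun x hxi hxj =>
        hxj.2 (Set.mem_biUnion h' hxi.1)
    · exact Set.disjoint_left.mpr fun x hxi hxj =>
        hxi.2 (Set.mem_biUnion h' hxj.1)
  have hcover : (⋃ i, A i) = Set.univ := by
    ext x
    simp only [Set.mem_univ, iff_true, Set.mem_iUnion]
    have hex : ∃ i, x ∈ B i := by
      obtain ⟨i, hi⟩ := Finite.exists_min (fun i => h i x)
      exact ⟨i, le_iInf hi⟩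
    let S := Finset.univ.filter (fun i => x ∈ B i)
    have hS : S.Nonempty := ⟨hex.choose, by simp [S, hex.choose_spec]⟩
    refine ⟨S.min' hS, (Finset.mem_filter.mp (S.min'_mem hS)).2, ?_⟩
    intro hmem
    simp only [Set.mem_iUnion] at hmem
    obtain ⟨j, hj, hxj⟩ := hmem
    exact absurd (S.min'_le j (by simp [S, hxj])) (not_le.mpr hj)
  have hAeq : ∀ i, ∀ x ∈ A i, f x = h i x := fun i x hx =>
    le_antisymm (hfle i x) hx.1
  have hkey : ∀ i, ∀ s : Set E, MeasurableSet s → μ (s ∩ A i) = ν i (s ∩ A i) := by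
    intro i s hs
    have hsA : MeasurableSet (s ∩ A i) := hs.inter (hAmeas i)
    rw [hμ, ← hν i, withDensity_apply _ hsA, withDensity_apply _ hsA]
    exact setLIntegral_congr_fun hsA
      (fun x hx => hAeq i x hx.2)
  refine ⟨⟨A, hAmeas, hdisj, hcover, hkey⟩, ?_⟩
  have hQsum : Q Set.univ = ∑ i, Q (A i) := by
    rw [← hcover, measure_iUnion hdisj hAmeas, tsum_fintype]
  have hμsum : μ Set.univ = ∑ i, μ (A i) := by
    rw [← hcover, measure_iUnion hdisj hAmeas, tsum_fintype]
  have hstep : ∀ i, Q (A i) ≤ μ (A i) + (Q Set.univ - ν i Set.univ) := by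
    intro i
    have hμA : μ (A i) = ν i (A i) := by
      have := hkey i Set.univ MeasurableSet.univ
      simpa using this
    rw [hμA]
    have hfin : ν i Set.univ ≠ ∞ := measure_ne_top _ _
    rw [← ENNReal.add_le_add_iff_right hfin, add_assoc,
      tsub_add_cancel_of_le (hle i Set.univ MeasurableSet.univ)]
    have h1 : ν i Set.univ ≤ ν i (A i) + Q (A i)ᶜ := by
      calc ν i Set.univ = ν i (A i) + ν i (A i)ᶜ :=
            (measure_add_measure_compl (hAmeas i)).symm
        _ ≤ ν i (A i) + Q (A i)ᶜ :=
            add_le_add_right (hle i _ (hAmeas i).compl) _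
    calc Q (A i) + ν i Set.univ ≤ Q (A i) + (ν i (A i) + Q (A i)ᶜ) :=
          add_le_add_right h1 _
      _ = ν i (A i) + (Q (A i) + Q (A i)ᶜ) := by ring
      _ = ν i (A i) + Q Set.univ := by
          rw [measure_add_measure_compl (hAmeas i)]
  calc Q Set.univ = ∑ i, Q (A i) := hQsum
    _ ≤ ∑ i, (μ (A i) + (Q Set.univ - ν i Set.univ)) :=
        Finset.sum_le_sum fun i _ => hstep i
    _ = μ Set.univ + ∑ i, (Q Set.univ - ν i Set.univ) := by
        rw [Finset.sum_add_distrib, ← hμsum]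
end

section
/- Let (Hᵗ, 𝓗ᵗ), t ∈ [0,∞), be the time-window projections of a path space (H, 𝓗), and let Z₁, Z₂, …, Z be random elements in (H, 𝓗). Suppose there exist numbers 0 ≤ t₁ ≤ t₂ ≤ … → ∞, a coupling (Ẑ₁^{t₁}, Ẑ₂^{t₂}, …, Ẑ) of the window segments Z₁^{t₁}, Z₂^{t₂}, …, Z, and an ℕ-valued random variable N with Ẑₙ^{tₙ} = Ẑ^{tₙ} for all n ≥ N. Then for every t ∈ [0,∞), Zₙᵗ → Zᵗ in density as n → ∞. -/
open MeasureTheory Filter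
open scoped ENNReal Topology

/-- `μs n → μ` in density: w.r.t. some σ-finite dominating measure, the liminf of
the densities of the `μs n` equals the density of `μ` almost everywhere. -/
def ConvInDensity {α : Type*} [MeasurableSpace α] (μs : ℕ → Measure α) (μ : Measure α) : Prop :=
  ∃ (lam : Measure α) (f : ℕ → α → ℝ≥0∞) (g : α → ℝ≥0∞),
    SigmaFinite lam ∧ (∀ n, Measurable (f n)) ∧ Measurable g ∧
    (∀ n, μs n = lam.withDensity (f n)) ∧ μ = lam.withDensity g ∧
    (∀ᵐ x ∂lam, liminf (fun n => f n x) atTop = g x)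

private lemma rnDeriv_mono_aux {α : Type*} [MeasurableSpace α] {μ ν lam : Measure α}
    [IsFiniteMeasure μ] [IsFiniteMeasure ν] [SigmaFinite lam]
    (h : μ ≤ ν) (hν : ν ≪ lam) : μ.rnDeriv lam ≤ᵐ[lam] ν.rnDeriv lam := by
  have hμ : μ ≪ lam := (Measure.absolutelyContinuous_of_le h).trans hν
  refine ae_le_of_forall_setLIntegral_le_of_sigmaFinite (Measure.measurable_rnDeriv _ _)
    fun A hA _ => ?_
  rw [Measure.setLIntegral_rnDeriv hμ, Measure.setLIntegral_rnDeriv hν]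
  exact h A

/-- If there exist times `tₙ ↑ ∞` and a coupling `(Ẑ₁^{t₁}, Ẑ₂^{t₂}, …, Ẑ)` of the
window segments with `Ẑₙ^{tₙ} = Ẑ^{tₙ}` for `n ≥ N`, then `Zₙᵗ → Zᵗ` in density
for every finite time window `t`. Here `π t : H → Hᵗ` are the window projections
and `ρ s t : Hᵗ → Hˢ` (for `s ≤ t`) the connecting restrictions. -/
theorem stmt9 {H : Type*} [MeasurableSpace H]
    (Ht : ℝ → Type*) [∀ t, MeasurableSpace (Ht t)]
    (π : ∀ t : ℝ, H → Ht t) (hπ : ∀ t, Measurable (π t))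
    (ρ : ∀ s t : ℝ, s ≤ t → Ht t → Ht s) (hρ : ∀ s t h, Measurable (ρ s t h))
    (hcomp : ∀ (s t : ℝ) (h : s ≤ t) (z : H), ρ s t h (π t z) = π s z)
    (Qn : ℕ → Measure H) (Q : Measure H)
    [∀ n, IsProbabilityMeasure (Qn n)] [IsProbabilityMeasure Q]
    (t : ℕ → ℝ) (ht0 : ∀ n, 0 ≤ t n) (htmono : Monotone t)
    (htlim : Tendsto t atTop atTop)
    {Ω : Type*} [MeasurableSpace Ω] (Pr : Measure Ω) [IsProbabilityMeasure Pr]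
    (Zh : ∀ n, Ω → Ht (t n)) (Z : Ω → H) (N : Ω → ℕ)
    (hZh : ∀ n, Measurable (Zh n)) (hZ : Measurable Z) (hN : Measurable N)
    (hlawn : ∀ n, Pr.map (Zh n) = (Qn n).map (π (t n)))
    (hlaw : Pr.map Z = Q)
    (hcoup : ∀ᵐ ω ∂Pr, ∀ n, N ω ≤ n → Zh n ω = π (t n) (Z ω)) :
    ∀ s : ℝ, 0 ≤ s →
      ConvInDensity (fun n => (Qn n).map (π s)) (Q.map (π s)) := by
  intro s hs
  set μ : Measure (Ht s) := Q.map (π s) with hμdef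
  set μn : ℕ → Measure (Ht s) := fun n => (Qn n).map (π s) with hμndef
  have hYmeas : Measurable (fun ω => π s (Z ω)) := (hπ s).comp hZ
  set Y : Ω → Ht s := fun ω => π s (Z ω) with hYdef
  have hμY : μ = Pr.map Y := by
    rw [hμdef, ← hlaw, Measure.map_map (hπ s) hZ]; rfl
  have hμnprob : ∀ n, IsProbabilityMeasure (μn n) := fun n =>
    Measure.isProbabilityMeasure_map (hπ s).aemeasurable
  haveI : IsProbabilityMeasure μ := Measure.isProbabilityMeasure_map (hπ s).aemeasurable
  -- the dominating measure
  set lam : Measure (Ht s) :=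
    μ + Measure.sum (fun n => ((2 : ℝ≥0∞)⁻¹) ^ (n + 1) • μn n) with hlamdef
  have hsum_le : ∀ n, ((2 : ℝ≥0∞)⁻¹) ^ (n + 1) • μn n ≤ lam := by
    intro n
    rw [hlamdef]
    exact Measure.le_add_left (Measure.le_sum _ n)
  haveI : IsFiniteMeasure lam := by
    constructor
    rw [hlamdef]
    have hsum : (Measure.sum (fun n => ((2 : ℝ≥0∞)⁻¹) ^ (n + 1) • μn n)) Set.univ
        = ∑' n : ℕ, ((2 : ℝ≥0∞)⁻¹) ^ (n + 1) := by
      rw [Measure.sum_apply _ MeasurableSet.univ]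
      congr 1; funext n
      haveI := hμnprob n
      simp [Measure.smul_apply]
    rw [Measure.add_apply, hsum, ENNReal.tsum_geometric_add_one]
    exact ENNReal.add_lt_top.mpr ⟨measure_lt_top _ _,
      ENNReal.mul_lt_top (by simp) (by simp)⟩
  have hacμ : μ ≪ lam := Measure.absolutelyContinuous_of_le (Measure.le_add_right le_rfl)
  have hacn : ∀ n, μn n ≪ lam := by
    intro n A hA
    have h1 : (((2 : ℝ≥0∞)⁻¹) ^ (n + 1) • μn n) A = 0 :=
      le_antisymm (hA ▸ hsum_le n A) zero_le
    rw [Measure.smul_apply, smul_eq_mul] at h1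
    have h2 : ((2 : ℝ≥0∞)⁻¹) ^ (n + 1) ≠ 0 := by simp
    simpa [h2] using h1
  haveI : ∀ n, IsFiniteMeasure (μn n) := fun n => by haveI := hμnprob n; infer_instance
  refine ⟨lam, fun n => (μn n).rnDeriv lam, μ.rnDeriv lam, inferInstance,
    fun n => Measure.measurable_rnDeriv _ _, Measure.measurable_rnDeriv _ _,
    fun n => (Measure.withDensity_rnDeriv_eq _ _ (hacn n)).symm,
    (Measure.withDensity_rnDeriv_eq _ _ hacμ).symm, ?_⟩
  -- the good event of the coupling
  set T := toMeasurable Pr {ω | ¬ ∀ n, N ω ≤ n → Zh n ω = π (t n) (Z ω)} with hTdef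
  have hTmeas : MeasurableSet T := measurableSet_toMeasurable _ _
  have hT0 : Pr T = 0 := by
    rw [hTdef, measure_toMeasurable]; exact ae_iff.mp hcoup
  set G := Tᶜ with hGdef
  have hGmeas : MeasurableSet G := hTmeas.compl
  have hGc : Pr Gᶜ = 0 := by rw [hGdef, compl_compl]; exact hT0
  have hGprop : ∀ ω ∈ G, ∀ n, N ω ≤ n → Zh n ω = π (t n) (Z ω) := by
    intro ω hω
    by_contra hc
    exact hω (subset_toMeasurable _ _ hc)
  -- approximating measures
  set B : ℕ → Set Ω := fun n => G ∩ N ⁻¹' Set.Iic n with hBdef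
  have hBmeas : ∀ n, MeasurableSet (B n) := fun n =>
    hGmeas.inter (hN measurableSet_Iic)
  have hBmono : Monotone B := fun m n hmn =>
    Set.inter_subset_inter_right _ (Set.preimage_mono (Set.Iic_subset_Iic.mpr (by exact_mod_cast hmn)))
  set α : ℕ → Measure (Ht s) := fun n => (Pr.restrict (B n)).map Y with hαdef
  haveI : ∀ n, IsFiniteMeasure (α n) := fun n => Measure.isFiniteMeasure_map _ _
  have hαμ : ∀ n, α n ≤ μ := fun n =>
    hμY ▸ Measure.map_mono Measure.restrict_le_self hYmeas
  have hαac : ∀ n, α n ≪ lam := fun n =>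
    (Measure.absolutelyContinuous_of_le (hαμ n)).trans hacμ
  set a : ℕ → Ht s → ℝ≥0∞ := fun n => (α n).rnDeriv lam with hadef
  have hameas : ∀ n, Measurable (a n) := fun n => Measure.measurable_rnDeriv _ _
  -- a.e. monotone
  have hamono : ∀ᵐ x ∂lam, ∀ n, a n x ≤ a (n + 1) x := by
    rw [ae_all_iff]
    intro n
    exact rnDeriv_mono_aux
      (Measure.map_mono (Measure.restrict_mono (hBmono (Nat.le_succ n)) le_rfl) hYmeas)
      (hαac (n + 1))
  -- eventually dominated by μn
  obtain ⟨n₀, hn₀⟩ : ∃ n₀ : ℕ, ∀ n, n₀ ≤ n → s ≤ t n :=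
    eventually_atTop.mp (htlim.eventually_ge_atTop s)
  have hαμn : ∀ n, n₀ ≤ n → α n ≤ μn n := by
    intro n hn
    have hst : s ≤ t n := hn₀ n hn
    have h1 : μn n = Pr.map (fun ω => ρ s (t n) hst (Zh n ω)) := by
      have hfun : π s = (ρ s (t n) hst) ∘ (π (t n)) := by
        funext z; exact (hcomp s (t n) hst z).symm
      calc μn n = (Qn n).map ((ρ s (t n) hst) ∘ (π (t n))) := by
            rw [hμndef]; dsimp only; rw [hfun]
        _ = ((Qn n).map (π (t n))).map (ρ s (t n) hst) :=
            (Measure.map_map (hρ _ _ _) (hπ _)).symm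
        _ = (Pr.map (Zh n)).map (ρ s (t n) hst) := by rw [hlawn n]
        _ = Pr.map ((ρ s (t n) hst) ∘ (Zh n)) := Measure.map_map (hρ _ _ _) (hZh n)
    have h2 : α n = (Pr.restrict (B n)).map (fun ω => ρ s (t n) hst (Zh n ω)) := by
      apply Measure.map_congr
      refine (ae_restrict_iff' (hBmeas n)).mpr (ae_of_all _ fun ω hω => ?_)
      have hZeq : Zh n ω = π (t n) (Z ω) := hGprop ω hω.1 n hω.2
      show Y ω = ρ s (t n) hst (Zh n ω)
      rw [hZeq, hcomp s (t n) hst]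
    rw [h2, h1]
    exact Measure.map_mono Measure.restrict_le_self ((hρ _ _ _).comp (hZh n))
  have haen : ∀ᵐ x ∂lam, ∀ n, n₀ ≤ n → a n x ≤ (μn n).rnDeriv lam x := by
    rw [ae_all_iff]
    intro n
    by_cases hn : n₀ ≤ n
    · filter_upwards [rnDeriv_mono_aux (hαμn n hn) (hacn n)] with x hx _
      exact hx
    · exact ae_of_all _ fun x hn' => absurd hn' hn
  -- the supremum of the aₙ is a density of μ
  have hsupmeas : Measurable fun x => ⨆ n, a n x := Measurable.iSup hameas
  have hwd : lam.withDensity (fun x => ⨆ n, a n x) = μ := by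
    ext A hA
    rw [withDensity_apply _ hA,
      lintegral_iSup' (fun n => (hameas n).aemeasurable)
        (ae_restrict_of_ae (hamono.mono fun x hx => monotone_nat_of_le_succ hx))]
    have h3 : ∀ n, ∫⁻ x in A, a n x ∂lam = Pr (Y ⁻¹' A ∩ B n) := fun n => by
      rw [hadef]
      rw [Measure.setLIntegral_rnDeriv (hαac n) A, hαdef]
      rw [Measure.map_apply hYmeas hA, Measure.restrict_apply (hYmeas hA)]
    simp_rw [h3]
    have hms : Monotone fun n => Y ⁻¹' A ∩ B n := fun m n hmn =>
      Set.inter_subset_inter_right _ (hBmono hmn)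
    rw [← Monotone.measure_iUnion hms]
    have hU : (⋃ n, Y ⁻¹' A ∩ B n) = Y ⁻¹' A ∩ G := by
      rw [← Set.inter_iUnion]
      congr 1
      rw [hBdef, ← Set.inter_iUnion]
      have : (⋃ n : ℕ, N ⁻¹' Set.Iic n) = Set.univ := by
        ext ω; simp only [Set.mem_iUnion, Set.mem_preimage, Set.mem_Iic, Set.mem_univ, iff_true]
        exact ⟨N ω, le_rfl⟩
      rw [this, Set.inter_univ]
    rw [hU, measure_inter_conull hGc, hμY, Measure.map_apply hYmeas hA]
  have hg_eq : μ.rnDeriv lam =ᵐ[lam] fun x => ⨆ n, a n x := by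
    conv_lhs => rw [← hwd]
    exact Measure.rnDeriv_withDensity lam hsupmeas
  -- liminf fₙ ≥ g a.e.
  have hge : ∀ᵐ x ∂lam,
      μ.rnDeriv lam x ≤ liminf (fun n => (μn n).rnDeriv lam x) atTop := by
    filter_upwards [hamono, haen, hg_eq] with x h1 h2 h3
    have hmon : Monotone fun n => a n x := monotone_nat_of_le_succ h1
    have htend : Tendsto (fun n => a n x) atTop (𝓝 (⨆ n, a n x)) := tendsto_atTop_iSup hmon
    calc μ.rnDeriv lam x = ⨆ n, a n x := h3
      _ = liminf (fun n => a n x) atTop := htend.liminf_eq.symm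
      _ ≤ liminf (fun n => (μn n).rnDeriv lam x) atTop :=
          liminf_le_liminf (eventually_atTop.mpr ⟨n₀, fun n hn => h2 n hn⟩)
  -- liminf fₙ ≤ g a.e. by mass comparison
  set h : Ht s → ℝ≥0∞ := fun x => liminf (fun n => (μn n).rnDeriv lam x) atTop with hhdef
  have hhmeas : Measurable h :=
    Measurable.liminf fun n => Measure.measurable_rnDeriv _ _
  have hinth : ∫⁻ x, h x ∂lam ≤ 1 := by
    calc ∫⁻ x, h x ∂lam
        ≤ liminf (fun n => ∫⁻ x, (μn n).rnDeriv lam x ∂lam) atTop :=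
          lintegral_liminf_le fun n => Measure.measurable_rnDeriv _ _
      _ = 1 := by
          have heq : ∀ n, ∫⁻ x, (μn n).rnDeriv lam x ∂lam = 1 := fun n => by
            haveI := hμnprob n
            rw [Measure.lintegral_rnDeriv (hacn n), measure_univ]
          simp_rw [heq]
          exact liminf_const 1
  have hintg : ∫⁻ x, μ.rnDeriv lam x ∂lam = 1 := by
    rw [Measure.lintegral_rnDeriv hacμ, measure_univ]
  have hle : h ≤ᵐ[lam] μ.rnDeriv lam := by
    have hsub : ∫⁻ x, h x - μ.rnDeriv lam x ∂lam = 0 := by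
      rw [lintegral_sub (Measure.measurable_rnDeriv _ _)
        (by rw [hintg]; exact ENNReal.one_ne_top) hge, hintg]
      exact tsub_eq_zero_iff_le.mpr hinth
    have h0 := (lintegral_eq_zero_iff (hhmeas.sub (Measure.measurable_rnDeriv _ _))).mp hsub
    filter_upwards [h0] with x hx
    exact tsub_eq_zero_iff_le.mp hx
  filter_upwards [hge, hle] with x h1 h2
  exact le_antisymm h2 h1
end

section
/- Let Z₁, Z₂, …, Z be random elements in a path space (H, 𝓗) over time [0,∞]. If Zₙᵗ → Zᵗ in density as n → ∞ for every t ∈ [0,∞), then there exist numbers 0 ≤ t₁ ≤ t₂ ≤ … → ∞, a coupling (Ẑ₁^{t₁}, Ẑ₂^{t₂}, …, Ẑ) of Z₁^{t₁}, Z₂^{t₂}, …, Z, and an ℕ-valued random variable N such that Ẑₙ^{tₙ} = Ẑ^{tₙ} for all n ≥ N. -/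
open MeasureTheory Filter
open scoped ENNReal

private lemma aux_map_withDensity {α β : Type*} [MeasurableSpace α] [MeasurableSpace β]
    (μ : Measure α) {p : α → β} (hp : Measurable p) {h : β → ℝ≥0∞} (hh : Measurable h) :
    (μ.withDensity (fun x => h (p x))).map p = (μ.map p).withDensity h := by
  ext A hA
  rw [Measure.map_apply hp hA, withDensity_apply _ hA, withDensity_apply _ (hp hA),
    setLIntegral_map hA hh hp]

private lemma aux_eq_of_le {α : Type*} [MeasurableSpace α] {μ ν : Measure α}
    [IsFiniteMeasure μ] (hle : μ ≤ ν) (h : ν Set.univ ≤ μ Set.univ) : μ = ν := by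
  have h0 : ν - μ = 0 := by
    rw [← Measure.measure_univ_eq_zero, Measure.sub_apply MeasurableSet.univ hle]
    exact tsub_eq_zero_of_le h
  have h1 := Measure.sub_add_cancel_of_le hle
  rw [h0, zero_add] at h1
  exact h1

private lemma aux_ptwise {fm : ℕ → ℝ≥0∞} {gv : ℝ≥0∞}
    (h : (⨆ n, ⨅ m, ⨅ _ : m ≥ n, fm m) = gv) (h0 : gv ≠ 0) (htop : gv ≠ ⊤) :
    (⨆ n, ⨅ m, ⨅ _ : m ≥ n, min (fm m) gv / gv) = 1 := by
  apply le_antisymm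
  · exact iSup_le fun n => le_trans (iInf₂_le n le_rfl)
      (le_trans (ENNReal.div_le_div_right (min_le_right _ _) _) ENNReal.div_self_le_one)
  · have hc : ∀ n, (⨅ m, ⨅ _ : m ≥ n, fm m) ≤ gv := fun n =>
      h ▸ le_iSup (fun n => ⨅ m, ⨅ _ : m ≥ n, fm m) n
    calc (1:ℝ≥0∞) = gv / gv := (ENNReal.div_self h0 htop).symm
      _ = (⨆ n, ⨅ m, ⨅ _ : m ≥ n, fm m) / gv := by rw [h]
      _ = ⨆ n, (⨅ m, ⨅ _ : m ≥ n, fm m) / gv := ENNReal.iSup_div _ _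
      _ ≤ _ := iSup_mono fun n => le_iInf₂ fun m hm =>
          ENNReal.div_le_div_right (le_min (iInf₂_le m hm) (hc n)) _

/-- If `Zₙᵗ → Zᵗ` in density for every finite `t ≥ 0`, then there exist times
`0 ≤ t₁ ≤ t₂ ≤ … → ∞`, a coupling `(Ẑ₁^{t₁}, Ẑ₂^{t₂}, …, Ẑ)` of
`Z₁^{t₁}, Z₂^{t₂}, …, Z`, and an `ℕ`-valued random variable `N` with
`Ẑₙ^{tₙ} = Ẑ^{tₙ}` for all `n ≥ N`. -/
theorem stmt10 {H : Type} [MeasurableSpace H]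
    (Ht : ℝ → Type) [∀ t, MeasurableSpace (Ht t)]
    (π : ∀ t : ℝ, H → Ht t) (hπ : ∀ t, Measurable (π t))
    (Qn : ℕ → Measure H) (Q : Measure H)
    [∀ n, IsProbabilityMeasure (Qn n)] [IsProbabilityMeasure Q]
    (hdens : ∀ s : ℝ, 0 ≤ s →
      ConvInDensity (fun n => (Qn n).map (π s)) (Q.map (π s))) :
    ∃ t : ℕ → ℝ, (∀ n, 0 ≤ t n) ∧ Monotone t ∧ Tendsto t atTop atTop ∧
      ∃ (Ω : Type) (_ : MeasurableSpace Ω) (Pr : Measure Ω),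
        IsProbabilityMeasure Pr ∧
        ∃ (Zh : ∀ n, Ω → Ht (t n)) (Z : Ω → H) (N : Ω → ℕ),
          (∀ n, Measurable (Zh n)) ∧ Measurable Z ∧ Measurable N ∧
          (∀ n, Pr.map (Zh n) = (Qn n).map (π (t n))) ∧
          Pr.map Z = Q ∧
          (∀ᵐ ω ∂Pr, ∀ n, N ω ≤ n → Zh n ω = π (t n) (Z ω)) := by
  classical
  rcases isEmpty_or_nonempty H with hH | hH
  · exfalso
    have h1 : (1:ℝ≥0∞) = 0 := by
      rw [← measure_univ (μ := Q), Set.univ_eq_empty_iff.mpr hH, measure_empty]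
    exact one_ne_zero h1
  have hd : ∀ j : ℕ, ConvInDensity (fun n => (Qn n).map (π (j : ℝ))) (Q.map (π (j : ℝ))) :=
    fun j => hdens _ (Nat.cast_nonneg j)
  choose lam f g _hσ hfm hgm hQnmap hQmap hlim using hd
  have hQmapP : ∀ j : ℕ, IsProbabilityMeasure (Q.map (π (j:ℝ))) :=
    fun j => Measure.isProbabilityMeasure_map (hπ _).aemeasurable
  have hQnmapP : ∀ n j : ℕ, IsProbabilityMeasure ((Qn n).map (π (j:ℝ))) :=
    fun n j => Measure.isProbabilityMeasure_map (hπ _).aemeasurable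
  -- the overlap ratio at time `j`
  set ρ : ∀ j : ℕ, ℕ → Ht (j:ℝ) → ℝ≥0∞ :=
    fun j m y => min (f j m y) (g j y) / g j y with hρ
  have hρm : ∀ j m, Measurable (ρ j m) := fun j m => ((hfm j m).min (hgm j)).div (hgm j)
  have hρ1 : ∀ j m y, ρ j m y ≤ 1 := fun j m y =>
    le_trans (ENNReal.div_le_div_right (min_le_right _ _) _) ENNReal.div_self_le_one
  set u : ℕ → ℕ → H → ℝ≥0∞ :=
    fun j n z => ⨅ m, ⨅ _ : m ≥ n, ρ j m (π (j:ℝ) z) with hu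
  have hum : ∀ j n, Measurable (u j n) :=
    fun j n => Measurable.iInf fun m => Measurable.iInf fun _ => (hρm j m).comp (hπ _)
  have hu1 : ∀ j n z, u j n z ≤ 1 := fun j n z => le_trans (iInf₂_le n le_rfl) (hρ1 _ _ _)
  have humono : ∀ j z, Monotone fun n => u j n z :=
    fun j z a b hab => le_iInf₂ fun m hm => iInf₂_le m (le_trans hab hm)
  -- a.e. convergence of the tail-infima of ratios, at each fixed time j
  have hae : ∀ j : ℕ, ∀ᵐ z ∂Q, (⨆ n, u j n z) = 1 := by
    intro j
    have hset : MeasurableSet {y : Ht (j:ℝ) | (⨆ n, ⨅ m, ⨅ _ : m ≥ n, ρ j m y) = 1} := by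
      have hm : Measurable fun y : Ht (j:ℝ) => ⨆ n, ⨅ m, ⨅ _ : m ≥ n, ρ j m y :=
        Measurable.iSup fun n => Measurable.iInf fun m => Measurable.iInf fun _ => hρm j m
      exact hm (measurableSet_singleton 1)
    have key : ∀ᵐ y ∂(Q.map (π (j:ℝ))), (⨆ n, ⨅ m, ⨅ _ : m ≥ n, ρ j m y) = 1 := by
      rw [hQmap j]
      have h2 : ∀ᵐ y ∂(lam j), g j y < ⊤ := by
        refine ae_lt_top (hgm j) ?_
        have he : ∫⁻ y, g j y ∂(lam j) = ((lam j).withDensity (g j)) Set.univ := by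
          rw [withDensity_apply _ MeasurableSet.univ, setLIntegral_univ]
        rw [he, ← hQmap j]
        haveI := hQmapP j
        rw [measure_univ]
        exact ENNReal.one_ne_top
      have h3 : ∀ᵐ y ∂((lam j).withDensity (g j)),
          liminf (fun n => f j n y) atTop = g j y ∧ g j y < ⊤ :=
        ((hlim j).and h2).filter_mono (withDensity_absolutelyContinuous (lam j) (g j)).ae_le
      have h4 : ∀ᵐ y ∂((lam j).withDensity (g j)), g j y ≠ 0 := by
        have hset0 : MeasurableSet {y : Ht (j:ℝ) | g j y = 0} := hgm j (measurableSet_singleton 0)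
        rw [ae_iff]
        have hseteq : {y : Ht (j:ℝ) | ¬ g j y ≠ 0} = {y | g j y = 0} := by ext y; simp
        rw [hseteq, withDensity_apply _ hset0]
        calc ∫⁻ y in {y | g j y = 0}, g j y ∂(lam j)
            = ∫⁻ _ in {y | g j y = 0}, 0 ∂(lam j) :=
              setLIntegral_congr_fun hset0 (fun y hy => hy)
          _ = 0 := by simp
      filter_upwards [h3, h4] with y hy hy0
      have hlims : (⨆ n, ⨅ m, ⨅ _ : m ≥ n, f j m y) = g j y := by
        rw [← liminf_eq_iSup_iInf_of_nat]; exact hy.1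
      exact aux_ptwise hlims hy0 hy.2.ne
    exact (ae_map_iff (hπ ((j:ℕ):ℝ)).aemeasurable hset).mp key
  -- hence the integrals of the tail-infima tend to one
  have hsupint : ∀ j : ℕ, (⨆ n, ∫⁻ z, u j n z ∂Q) = 1 := by
    intro j
    rw [← lintegral_iSup (hum j) (fun a b hab z => humono j z hab)]
    calc ∫⁻ z, ⨆ n, u j n z ∂Q = ∫⁻ _, 1 ∂Q := lintegral_congr_ae (hae j)
      _ = 1 := by rw [lintegral_one, measure_univ]
  have hthr : ∀ j : ℕ, ∃ n0 : ℕ, ∀ n, n0 ≤ n →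
      1 - (2:ℝ≥0∞)⁻¹ ^ j ≤ ∫⁻ z, u j n z ∂Q := by
    intro j
    have hpow0 : ((2:ℝ≥0∞)⁻¹) ^ j ≠ 0 :=
      pow_ne_zero _ (ENNReal.inv_ne_zero.mpr ENNReal.ofNat_ne_top)
    have hlt : (1:ℝ≥0∞) - 2⁻¹ ^ j < ⨆ n, ∫⁻ z, u j n z ∂Q := by
      rw [hsupint j]
      exact ENNReal.sub_lt_self ENNReal.one_ne_top one_ne_zero hpow0
    obtain ⟨n0, hn0⟩ := lt_iSup_iff.mp hlt
    exact ⟨n0, fun n hn => hn0.le.trans (lintegral_mono fun z => humono j z hn)⟩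
  choose Nthr hNthr using hthr
  -- the increasing sequence of block starts
  set nseq : ℕ → ℕ := fun j => Nat.rec 0 (fun i ih => max (ih + 1) (Nthr (i+1))) j with hnseq
  have hnseq0 : nseq 0 = 0 := rfl
  have hnseqS : ∀ j, nseq (j+1) = max (nseq j + 1) (Nthr (j+1)) := fun j => rfl
  have hnseq_lt : ∀ j, nseq j < nseq (j+1) := fun j =>
    lt_of_lt_of_le (Nat.lt_succ_self _) (by rw [hnseqS]; exact le_max_left _ _)
  have hnseq_self : ∀ j, j ≤ nseq j := by
    intro j
    induction j with
    | zero => simp [hnseq0]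
    | succ i ih => exact Nat.succ_le.mpr (lt_of_le_of_lt ih (hnseq_lt i))
  have hbound : ∀ j, 1 - (2:ℝ≥0∞)⁻¹ ^ j ≤ ∫⁻ z, u j (nseq j) z ∂Q := by
    intro j
    cases j with
    | zero => simp
    | succ i => exact hNthr (i+1) _ (by rw [hnseqS]; exact le_max_right _ _)
  set J : ℕ → ℕ := fun m => Nat.findGreatest (fun j => nseq j ≤ m) m with hJdef
  have hJ1 : ∀ m, nseq (J m) ≤ m := fun m =>
    Nat.findGreatest_spec (P := fun j => nseq j ≤ m) (Nat.zero_le m)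
      (by simp [hnseq0])
  have hJmono : Monotone J := fun a b hab =>
    Nat.findGreatest_mono (fun j hj => le_trans hj hab) hab
  have hJge : ∀ j m, nseq j ≤ m → j ≤ J m :=
    fun j m h => Nat.le_findGreatest (le_trans (hnseq_self j) h) h
  have hJtop : Tendsto J atTop atTop :=
    tendsto_atTop.mpr fun b => eventually_atTop.mpr ⟨nseq b, fun m hm => hJge b m hm⟩
  -- the diagonal density functions
  set w : ℕ → H → ℝ≥0∞ := fun m z => ρ (J m) m (π (J m : ℝ) z) with hw
  have hwm : ∀ m, Measurable (w m) := fun m => (hρm _ _).comp (hπ _)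
  have hw1 : ∀ m z, w m z ≤ 1 := fun m z => hρ1 _ _ _
  set φ : ℕ → H → ℝ≥0∞ := fun n z => ⨅ m, ⨅ _ : m ≥ n, w m z with hφ
  have hφm : ∀ n, Measurable (φ n) :=
    fun n => Measurable.iInf fun m => Measurable.iInf fun _ => hwm m
  have hφ1 : ∀ n z, φ n z ≤ 1 := fun n z => le_trans (iInf₂_le n le_rfl) (hw1 n z)
  have hφmono : ∀ z, Monotone fun n => φ n z :=
    fun z a b hab => le_iInf₂ fun m hm => iInf₂_le m (le_trans hab hm)
  have hφlew : ∀ n z, φ n z ≤ w n z := fun n z => iInf₂_le n le_rfl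
  -- comparison with the block infima
  have hchi : ∀ n z, (⨅ i : ℕ, u (J n + i) (nseq (J n + i)) z) ≤ φ n z := by
    intro n z
    refine le_iInf₂ fun m hm => ?_
    refine iInf_le_of_le (J m - J n) ?_
    rw [Nat.add_sub_cancel' (hJmono hm)]
    exact iInf₂_le m (hJ1 m)
  have hχm : ∀ n, Measurable fun z => ⨅ i : ℕ, u (J n + i) (nseq (J n + i)) z :=
    fun n => Measurable.iInf fun i => hum _ _
  have hχ1 : ∀ n z, (⨅ i : ℕ, u (J n + i) (nseq (J n + i)) z) ≤ 1 :=
    fun n z => le_trans (iInf_le _ 0) (hu1 _ _ _)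
  have hIχ : ∀ n, 1 - (2:ℝ≥0∞)⁻¹ ^ (J n) * 2
      ≤ ∫⁻ z, (⨅ i : ℕ, u (J n + i) (nseq (J n + i)) z) ∂Q := by
    intro n
    have hfin : ∫⁻ z, (⨅ i : ℕ, u (J n + i) (nseq (J n + i)) z) ∂Q ≠ ⊤ := by
      refine ne_top_of_le_ne_top ENNReal.one_ne_top ?_
      calc ∫⁻ z, (⨅ i : ℕ, u (J n + i) (nseq (J n + i)) z) ∂Q
          ≤ ∫⁻ _, 1 ∂Q := lintegral_mono fun z => hχ1 n z
        _ = 1 := by rw [lintegral_one, measure_univ]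
    have hsub : ∫⁻ z, (1 - ⨅ i : ℕ, u (J n + i) (nseq (J n + i)) z) ∂Q
        = 1 - ∫⁻ z, (⨅ i : ℕ, u (J n + i) (nseq (J n + i)) z) ∂Q := by
      have hls := lintegral_sub (μ := Q) (f := fun _ => 1)
        (g := fun z => ⨅ i : ℕ, u (J n + i) (nseq (J n + i)) z)
        (hχm n) hfin (ae_of_all _ fun z => hχ1 n z)
      rw [lintegral_one, measure_univ] at hls
      exact hls
    have hpt : ∀ z, (1:ℝ≥0∞) - (⨅ i : ℕ, u (J n + i) (nseq (J n + i)) z)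
        ≤ ∑' i : ℕ, (1 - u (J n + i) (nseq (J n + i)) z) := by
      intro z
      rw [ENNReal.sub_iInf]
      exact iSup_le fun i => ENNReal.le_tsum i
    have hint : ∫⁻ z, (1 - ⨅ i : ℕ, u (J n + i) (nseq (J n + i)) z) ∂Q
        ≤ (2:ℝ≥0∞)⁻¹ ^ (J n) * 2 := by
      calc ∫⁻ z, (1 - ⨅ i : ℕ, u (J n + i) (nseq (J n + i)) z) ∂Q
          ≤ ∫⁻ z, ∑' i : ℕ, (1 - u (J n + i) (nseq (J n + i)) z) ∂Q := lintegral_mono hpt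
        _ = ∑' i : ℕ, ∫⁻ z, (1 - u (J n + i) (nseq (J n + i)) z) ∂Q :=
            lintegral_tsum fun i => (measurable_const.sub (hum _ _)).aemeasurable
        _ ≤ ∑' i : ℕ, (2:ℝ≥0∞)⁻¹ ^ (J n + i) := by
            refine ENNReal.tsum_le_tsum fun i => ?_
            have hfin2 : ∫⁻ z, u (J n + i) (nseq (J n + i)) z ∂Q ≠ ⊤ := by
              refine ne_top_of_le_ne_top ENNReal.one_ne_top ?_
              calc ∫⁻ z, u (J n + i) (nseq (J n + i)) z ∂Q
                  ≤ ∫⁻ _, 1 ∂Q := lintegral_mono fun z => hu1 _ _ z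
                _ = 1 := by rw [lintegral_one, measure_univ]
            have hs : ∫⁻ z, (1 - u (J n + i) (nseq (J n + i)) z) ∂Q
                = 1 - ∫⁻ z, u (J n + i) (nseq (J n + i)) z ∂Q := by
              have hls := lintegral_sub (μ := Q) (f := fun _ => 1)
                (g := fun z => u (J n + i) (nseq (J n + i)) z)
                (hum _ _) hfin2 (ae_of_all _ fun z => hu1 _ _ z)
              rw [lintegral_one, measure_univ] at hls
              exact hls
            rw [hs]
            exact tsub_le_iff_right.mpr
              ((tsub_le_iff_right.mp (hbound (J n + i))).trans_eq (add_comm _ _))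
        _ = (2:ℝ≥0∞)⁻¹ ^ (J n) * 2 := by
            simp_rw [pow_add]
            rw [ENNReal.tsum_mul_left, ENNReal.tsum_geometric, ENNReal.one_sub_inv_two,
              inv_inv]
    rw [hsub] at hint
    exact tsub_le_iff_right.mpr ((tsub_le_iff_right.mp hint).trans_eq (add_comm _ _))
  -- the masses of the φ n tend to one
  have hφsupint : (⨆ n, ∫⁻ z, φ n z ∂Q) = 1 := by
    apply le_antisymm
    · refine iSup_le fun n => ?_
      calc ∫⁻ z, φ n z ∂Q ≤ ∫⁻ _, 1 ∂Q := lintegral_mono fun z => hφ1 n z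
        _ = 1 := by rw [lintegral_one, measure_univ]
    · have h1 : ∀ j : ℕ, 1 - (2:ℝ≥0∞)⁻¹ ^ j * 2 ≤ ⨆ n, ∫⁻ z, φ n z ∂Q := by
        intro j
        refine le_trans ?_ (le_iSup (fun n => ∫⁻ z, φ n z ∂Q) (nseq j))
        refine le_trans ?_ ((hIχ (nseq j)).trans (lintegral_mono fun z => hchi (nseq j) z))
        have hJge' : j ≤ J (nseq j) := hJge j (nseq j) le_rfl
        have hpw : (2:ℝ≥0∞)⁻¹ ^ (J (nseq j)) ≤ 2⁻¹ ^ j :=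
          pow_le_pow_of_le_one zero_le (by simp) hJge'
        exact tsub_le_tsub_left (mul_le_mul_left hpw 2) 1
      have hinf0 : (⨅ j : ℕ, (2:ℝ≥0∞)⁻¹ ^ j) = 0 :=
        tendsto_nhds_unique
          (tendsto_atTop_iInf (fun a b hab => pow_le_pow_of_le_one zero_le (by simp) hab))
          (ENNReal.tendsto_pow_atTop_nhds_zero_of_lt_one (by simp))
      have hone : (1:ℝ≥0∞) = ⨆ j : ℕ, (1 - (2:ℝ≥0∞)⁻¹ ^ j * 2) := by
        rw [← ENNReal.sub_iInf]
        have hz : (⨅ j : ℕ, (2:ℝ≥0∞)⁻¹ ^ j * 2) = 0 := by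
          apply le_antisymm _ zero_le
          have hle : (⨅ j : ℕ, (2:ℝ≥0∞)⁻¹ ^ j * 2) ≤ ⨅ j : ℕ, (2:ℝ≥0∞)⁻¹ ^ j := by
            refine le_iInf fun j => ?_
            refine iInf_le_of_le (j+1) ?_
            rw [pow_succ, mul_assoc, ENNReal.inv_mul_cancel two_ne_zero ENNReal.ofNat_ne_top,
              mul_one]
          exact hle.trans_eq hinf0
        rw [hz, tsub_zero]
      rw [hone]
      exact iSup_le fun j => h1 j
  have hφsupm : Measurable fun z => ⨆ n, φ n z := Measurable.iSup hφm
  have hφsup1 : ∀ z, (⨆ n, φ n z) ≤ 1 := fun z => iSup_le fun n => hφ1 n z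
  have hintsup : ∫⁻ z, (⨆ n, φ n z) ∂Q = 1 := by
    rw [lintegral_iSup hφm (fun a b hab z => hφmono z hab)]
    exact hφsupint
  have haesup : ∀ᵐ z ∂Q, (⨆ n, φ n z) = 1 := by
    have h0 : ∫⁻ z, (1 - ⨆ n, φ n z) ∂Q = 0 := by
      have hls := lintegral_sub (μ := Q) (f := fun _ => 1) (g := fun z => ⨆ n, φ n z)
        hφsupm (by rw [hintsup]; exact ENNReal.one_ne_top) (ae_of_all _ hφsup1)
      rw [lintegral_one, measure_univ, hintsup, tsub_self] at hls
      exact hls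
    have hz := (lintegral_eq_zero_iff (measurable_const.sub hφsupm)).mp h0
    filter_upwards [hz] with z hzz
    have hzz' : (1:ℝ≥0∞) - (⨆ n, φ n z) = 0 := hzz
    exact le_antisymm (hφsup1 z) (tsub_eq_zero_iff_le.mp hzz')
  -- decomposition of Q into components
  set ψ : ℕ → H → ℝ≥0∞ :=
    fun k => Nat.rec (motive := fun _ => H → ℝ≥0∞) (φ 0) (fun i _ z => φ (i+1) z - φ i z) k
    with hψ
  have hψ0 : ψ 0 = φ 0 := rfl
  have hψS : ∀ k, ψ (k+1) = fun z => φ (k+1) z - φ k z := fun k => rfl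
  have hψm : ∀ k, Measurable (ψ k) := by
    intro k
    cases k with
    | zero => exact hφm 0
    | succ i => exact (hφm (i+1)).sub (hφm i)
  have hψ1 : ∀ k z, ψ k z ≤ 1 := by
    intro k z
    cases k with
    | zero => exact hφ1 0 z
    | succ i => exact le_trans tsub_le_self (hφ1 (i+1) z)
  have hpsum : ∀ n z, ∑ k ∈ Finset.range (n+1), ψ k z = φ n z := by
    intro n z
    induction n with
    | zero => simp [hψ0]
    | succ i ih =>
        rw [Finset.sum_range_succ, ih]
        show φ i z + (φ (i+1) z - φ i z) = φ (i+1) z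
        rw [add_comm]
        exact tsub_add_cancel_of_le (hφmono z (Nat.le_succ i))
  have htsumψ : ∀ z, (∑' k, ψ k z) = ⨆ n, φ n z := by
    intro z
    rw [ENNReal.tsum_eq_iSup_nat]
    apply le_antisymm
    · refine iSup_le fun n => ?_
      cases n with
      | zero => simp
      | succ i => exact (hpsum i z).le.trans (le_iSup (fun n => φ n z) i)
    · exact iSup_le fun n =>
        (hpsum n z).symm.le.trans (le_iSup (fun i => ∑ k ∈ Finset.range i, ψ k z) (n+1))
  have hsumγ : (Measure.sum fun k => Q.withDensity (ψ k)) = Q := by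
    rw [← withDensity_tsum hψm]
    have hfun : (∑' k, ψ k) = fun z => ⨆ n, φ n z := by
      funext z
      rw [tsum_apply (Pi.summable.mpr fun _ => ENNReal.summable)]
      exact htsumψ z
    rw [hfun]
    calc Q.withDensity (fun z => ⨆ n, φ n z) = Q.withDensity 1 :=
          withDensity_congr_ae haesup
      _ = Q := withDensity_one
  -- finiteness
  have hgle1 : ∀ n, (Q.withDensity (φ n)) Set.univ ≤ 1 := by
    intro n
    rw [withDensity_apply _ MeasurableSet.univ, setLIntegral_univ]
    calc ∫⁻ z, φ n z ∂Q ≤ ∫⁻ _, 1 ∂Q := lintegral_mono fun z => hφ1 n z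
      _ = 1 := by rw [lintegral_one, measure_univ]
  have hGfin : ∀ n, IsFiniteMeasure (Q.withDensity (φ n)) :=
    fun n => ⟨lt_of_le_of_lt (hgle1 n) ENNReal.one_lt_top⟩
  have hγfin : ∀ k, IsFiniteMeasure (Q.withDensity (ψ k)) := by
    intro k
    constructor
    rw [withDensity_apply _ MeasurableSet.univ, setLIntegral_univ]
    calc ∫⁻ z, ψ k z ∂Q ≤ ∫⁻ _, 1 ∂Q := lintegral_mono fun z => hψ1 k z
      _ = 1 := by rw [lintegral_one, measure_univ]
      _ < ⊤ := ENNReal.one_lt_top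
  -- the key domination inequality
  have hGle : ∀ n, (Q.withDensity (φ n)).map (π (J n : ℝ)) ≤ (Qn n).map (π (J n : ℝ)) := by
    intro n
    calc (Q.withDensity (φ n)).map (π (J n : ℝ))
        ≤ (Q.withDensity (w n)).map (π (J n : ℝ)) :=
          Measure.map_mono (withDensity_mono (ae_of_all _ fun z => hφlew n z)) (hπ _)
      _ = (Q.map (π (J n : ℝ))).withDensity (ρ (J n) n) :=
          aux_map_withDensity Q (hπ ((J n : ℕ) : ℝ)) (hρm (J n) n)
      _ = ((lam (J n)).withDensity (g (J n))).withDensity (ρ (J n) n) := by rw [hQmap (J n)]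
      _ = (lam (J n)).withDensity (g (J n) * ρ (J n) n) :=
          (withDensity_mul _ (hgm _) (hρm _ _)).symm
      _ ≤ (lam (J n)).withDensity (f (J n) n) := by
          refine withDensity_mono (ae_of_all _ fun y => ?_)
          calc (g (J n) * ρ (J n) n) y
              = g (J n) y * (min (f (J n) n y) (g (J n) y) / g (J n) y) := rfl
            _ ≤ min (f (J n) n y) (g (J n) y) := ENNReal.mul_div_le
            _ ≤ f (J n) n y := min_le_left _ _
      _ = (Qn n).map (π (J n : ℝ)) := (hQnmap (J n) n).symm
  -- excess measures and mixing measures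
  set sdef : ℕ → ℝ≥0∞ := fun n => 1 - (Q.withDensity (φ n)) Set.univ with hsdef
  set R : ∀ n : ℕ, Measure (Ht (J n : ℝ)) :=
    fun n => (Qn n).map (π (J n : ℝ)) - (Q.withDensity (φ n)).map (π (J n : ℝ)) with hR
  have hmapGfin : ∀ n, IsFiniteMeasure ((Q.withDensity (φ n)).map (π (J n : ℝ))) := by
    intro n
    refine ⟨?_⟩
    rw [Measure.map_apply (hπ _) MeasurableSet.univ, Set.preimage_univ]
    exact lt_of_le_of_lt (hgle1 n) ENNReal.one_lt_top
  have hRuniv : ∀ n, R n Set.univ = sdef n := by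
    intro n
    haveI := hmapGfin n
    haveI := hQnmapP n (J n)
    show ((Qn n).map (π (J n : ℝ)) - (Q.withDensity (φ n)).map (π (J n : ℝ))) Set.univ = sdef n
    rw [Measure.sub_apply MeasurableSet.univ (hGle n), measure_univ,
      Measure.map_apply (hπ _) MeasurableSet.univ, Set.preimage_univ]
  have hsne_top : ∀ n, sdef n ≠ ⊤ := fun n => (tsub_le_self.trans_lt ENNReal.one_lt_top).ne
  set ζ : ∀ n : ℕ, Measure (Ht (J n : ℝ)) :=
    fun n => if sdef n = 0 then Measure.dirac (π (J n : ℝ) (Classical.arbitrary H))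
      else (sdef n)⁻¹ • R n with hζ
  have hζprob : ∀ n, IsProbabilityMeasure (ζ n) := by
    intro n
    by_cases hs : sdef n = 0
    · have : ζ n = Measure.dirac (π (J n : ℝ) (Classical.arbitrary H)) := by
        simp only [hζ]; rw [if_pos hs]
      rw [this]; infer_instance
    · have hzeq : ζ n = (sdef n)⁻¹ • R n := by
        simp only [hζ]; rw [if_neg hs]
      refine ⟨?_⟩
      rw [hzeq, Measure.smul_apply, hRuniv n, smul_eq_mul,
        ENNReal.inv_mul_cancel hs (hsne_top n)]
  haveI hζprobI : ∀ n, IsProbabilityMeasure (ζ n) := hζprob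
  -- the coupling identity at each n
  have hkey : ∀ n, (Q.withDensity (φ n)).map (π (J n : ℝ)) + sdef n • ζ n
      = (Qn n).map (π (J n : ℝ)) := by
    intro n
    haveI := hmapGfin n
    haveI := hQnmapP n (J n)
    by_cases hs : sdef n = 0
    · rw [hs, zero_smul, add_zero]
      refine aux_eq_of_le (hGle n) ?_
      rw [measure_univ, Measure.map_apply (hπ _) MeasurableSet.univ, Set.preimage_univ]
      exact tsub_eq_zero_iff_le.mp hs
    · have hzeq : ζ n = (sdef n)⁻¹ • R n := by
        simp only [hζ]; rw [if_neg hs]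
      rw [hzeq, smul_smul, ENNReal.mul_inv_cancel hs (hsne_top n), one_smul, add_comm]
      exact Measure.sub_add_cancel_of_le (hGle n)
  -- the coupling space and measure
  set Φ : ∀ k : ℕ, H × ((i : Fin k) → Ht (J i.1 : ℝ)) → ℕ × H × ((m : ℕ) → Ht (J m : ℝ)) :=
    fun k p => (k, p.1, fun m => if h : m < k then p.2 ⟨m, h⟩ else π (J m : ℝ) p.1) with hΦ
  have hΦm : ∀ k, Measurable (Φ k) := by
    intro k
    simp only [hΦ]
    refine measurable_const.prodMk (measurable_fst.prodMk (measurable_pi_lambda _ fun m => ?_))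
    by_cases h : m < k
    · simp only [dif_pos h]
      exact (measurable_pi_apply _).comp measurable_snd
    · simp only [dif_neg h]
      exact (hπ _).comp measurable_fst
  set Ppi : ∀ k : ℕ, Measure ((i : Fin k) → Ht (J i.1 : ℝ)) :=
    fun k => Measure.pi (fun i : Fin k => ζ i.1) with hPpi
  have hPpiProb : ∀ k, IsProbabilityMeasure (Ppi k) := by
    intro k
    simp only [hPpi]
    infer_instance
  set Pr : Measure (ℕ × H × ((m : ℕ) → Ht (J m : ℝ))) :=
    Measure.sum (fun k => ((Q.withDensity (ψ k)).prod (Ppi k)).map (Φ k)) with hPr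
  set Zf : (ℕ × H × ((m : ℕ) → Ht (J m : ℝ))) → H := fun ω => ω.2.1 with hZf
  set Nf : (ℕ × H × ((m : ℕ) → Ht (J m : ℝ))) → ℕ := fun ω => ω.1 with hNf
  set Zh : ∀ n : ℕ, (ℕ × H × ((m : ℕ) → Ht (J m : ℝ))) → Ht (J n : ℝ) :=
    fun n ω => if n < ω.1 then ω.2.2 n else π (J n : ℝ) ω.2.1 with hZh
  have hZfm : Measurable Zf := measurable_fst.comp measurable_snd
  have hNfm : Measurable Nf := measurable_fst
  have hZhm : ∀ n, Measurable (Zh n) := by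
    intro n
    simp only [hZh]
    have hsetm : MeasurableSet {ω : ℕ × H × ((m : ℕ) → Ht (J m : ℝ)) | n < ω.1} :=
      measurable_fst (Set.to_countable {k : ℕ | n < k}).measurableSet
    exact Measurable.ite hsetm
      ((measurable_pi_apply n).comp (measurable_snd.comp measurable_snd))
      ((hπ _).comp (measurable_fst.comp measurable_snd))
  -- the marginal of Zf is Q
  have hmargZ : Pr.map Zf = Q := by
    ext A hA
    rw [Measure.map_apply hZfm hA]
    show Pr (Zf ⁻¹' A) = Q A
    rw [hPr, Measure.sum_apply _ (hZfm hA)]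
    have hterm : ∀ k, (((Q.withDensity (ψ k)).prod (Ppi k)).map (Φ k)) (Zf ⁻¹' A)
        = (Q.withDensity (ψ k)) A := by
      intro k
      haveI := hγfin k
      haveI := hPpiProb k
      rw [Measure.map_apply (hΦm k) (hZfm hA)]
      have hpre : (Φ k) ⁻¹' (Zf ⁻¹' A) = A ×ˢ (Set.univ : Set ((i : Fin k) → Ht (J i.1 : ℝ))) := by
        ext p
        simp [hΦ, hZf]
      rw [hpre, Measure.prod_prod, measure_univ, mul_one]
    calc (∑' k, (((Q.withDensity (ψ k)).prod (Ppi k)).map (Φ k)) (Zf ⁻¹' A))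
        = ∑' k, (Q.withDensity (ψ k)) A := tsum_congr hterm
      _ = (Measure.sum fun k => Q.withDensity (ψ k)) A := (Measure.sum_apply _ hA).symm
      _ = Q A := by rw [hsumγ]
  have hPruniv : Pr Set.univ = 1 := by
    have h1 := congrArg (fun μ : Measure H => μ Set.univ) hmargZ
    rw [Measure.map_apply hZfm MeasurableSet.univ, Set.preimage_univ] at h1
    rw [h1]
    exact measure_univ
  haveI hPrP : IsProbabilityMeasure Pr := ⟨hPruniv⟩
  -- the marginals of the Zh n
  have hmargZh : ∀ n, Pr.map (Zh n) = (Qn n).map (π (J n : ℝ)) := by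
    intro n
    ext A hA
    rw [Measure.map_apply (hZhm n) hA]
    show Pr ((Zh n) ⁻¹' A) = ((Qn n).map (π (J n : ℝ))) A
    rw [hPr, Measure.sum_apply _ ((hZhm n) hA)]
    have hterm : ∀ k, (((Q.withDensity (ψ k)).prod (Ppi k)).map (Φ k)) ((Zh n) ⁻¹' A)
        = if n < k then (Q.withDensity (ψ k)) Set.univ * ζ n A
          else (Q.withDensity (ψ k)) (π (J n : ℝ) ⁻¹' A) := by
      intro k
      haveI := hγfin k
      haveI := hPpiProb k
      rw [Measure.map_apply (hΦm k) ((hZhm n) hA)]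
      by_cases hnk : n < k
      · rw [if_pos hnk]
        have hpre : (Φ k) ⁻¹' ((Zh n) ⁻¹' A)
            = (Set.univ : Set H) ×ˢ (Function.eval (⟨n, hnk⟩ : Fin k) ⁻¹' A) := by
          ext p
          simp [hΦ, hZh, hnk]
        rw [hpre, Measure.prod_prod]
        congr 1
        show (Measure.pi fun i : Fin k => ζ i.1) (Function.eval (⟨n, hnk⟩ : Fin k) ⁻¹' A) = ζ n A
        rw [Set.eval_preimage, Measure.pi_pi]
        rw [Finset.prod_eq_single_of_mem (⟨n, hnk⟩ : Fin k) (Finset.mem_univ _)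
          (fun b _ hb => by rw [Function.update_of_ne hb]; exact measure_univ)]
        rw [Function.update_self]
      · rw [if_neg hnk]
        have hpre : (Φ k) ⁻¹' ((Zh n) ⁻¹' A)
            = (π (J n : ℝ) ⁻¹' A) ×ˢ (Set.univ : Set ((i : Fin k) → Ht (J i.1 : ℝ))) := by
          ext p
          simp [hΦ, hZh, hnk]
        rw [hpre, Measure.prod_prod, measure_univ, mul_one]
    rw [tsum_congr hterm]
    have hhead : ∀ (B : Set H), MeasurableSet B →
        ∑ k ∈ Finset.range (n+1), (Q.withDensity (ψ k)) B = (Q.withDensity (φ n)) B := by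
      intro B hB
      simp_rw [withDensity_apply _ hB]
      rw [← lintegral_finset_sum _ (fun k _ => hψm k)]
      exact lintegral_congr fun z => hpsum n z
    have hsplit := Summable.sum_add_tsum_nat_add'
      (f := fun k => if n < k then (Q.withDensity (ψ k)) Set.univ * ζ n A
        else (Q.withDensity (ψ k)) (π (J n : ℝ) ⁻¹' A)) (k := n+1) ENNReal.summable
    rw [← hsplit]
    have h1 : (∑ k ∈ Finset.range (n+1),
        if n < k then (Q.withDensity (ψ k)) Set.univ * ζ n A
        else (Q.withDensity (ψ k)) (π (J n : ℝ) ⁻¹' A))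
        = (Q.withDensity (φ n)) (π (J n : ℝ) ⁻¹' A) := by
      rw [Finset.sum_congr rfl
        (fun k hk => if_neg (not_lt.mpr (Nat.lt_succ_iff.mp (Finset.mem_range.mp hk))))]
      exact hhead _ (hπ _ hA)
    have htail : (∑' i : ℕ, (Q.withDensity (ψ (i + (n+1)))) Set.univ) = sdef n := by
      have htot : (∑' k, (Q.withDensity (ψ k)) Set.univ) = 1 := by
        rw [← Measure.sum_apply _ MeasurableSet.univ, hsumγ, measure_univ]
      have hsplit2 := Summable.sum_add_tsum_nat_add'
        (f := fun k => (Q.withDensity (ψ k)) Set.univ) (k := n+1) ENNReal.summable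
      rw [hhead Set.univ MeasurableSet.univ, htot] at hsplit2
      have := ENNReal.eq_sub_of_add_eq
        (ne_top_of_le_ne_top ENNReal.one_ne_top (hgle1 n))
        ((add_comm _ _).trans hsplit2)
      exact this
    have h2 : (∑' i : ℕ,
        if n < i + (n+1) then (Q.withDensity (ψ (i + (n+1)))) Set.univ * ζ n A
        else (Q.withDensity (ψ (i + (n+1)))) (π (J n : ℝ) ⁻¹' A))
        = sdef n * ζ n A := by
      rw [tsum_congr (fun i => if_pos (by omega))]
      rw [ENNReal.tsum_mul_right, htail]
    rw [h1, h2]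
    have hk := congrArg (fun μ : Measure (Ht (J n : ℝ)) => μ A) (hkey n)
    simp only [Measure.coe_add, Pi.add_apply, Measure.smul_apply, smul_eq_mul] at hk
    rw [Measure.map_apply (hπ _) hA] at hk
    exact hk
  -- the a.e. eventual-equality property holds everywhere by construction
  have haefin : ∀ᵐ ω ∂Pr, ∀ n, Nf ω ≤ n → Zh n ω = π (J n : ℝ) (Zf ω) := by
    refine ae_of_all _ fun ω n hn => ?_
    show (if n < ω.1 then ω.2.2 n else π (J n : ℝ) ω.2.1) = π (J n : ℝ) ω.2.1
    rw [if_neg (not_lt.mpr hn)]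
  exact ⟨fun m => (J m : ℝ), fun m => Nat.cast_nonneg _,
    fun a b hab => Nat.cast_le.mpr (hJmono hab),
    tendsto_natCast_atTop_atTop.comp hJtop,
    ℕ × H × ((m : ℕ) → Ht (J m : ℝ)), inferInstance, Pr, hPrP,
    Zh, Zf, Nf, hZhm, hZfm, hNfm, hmargZh, hmargZ, haefin⟩
end

section
/- Let Z₁, Z₂, …, Z be random elements in a countable product of measurable spaces (E¹,𝓔¹)⊗(E²,𝓔²)⊗…⊗(E^∞,𝓔^∞), and write Zᵏ = (Z¹,…,Zᵏ) for the first k coordinates. Then Zₙᵏ → Zᵏ in density as n → ∞ for every k ∈ ℕ if and only if there exist integers 0 ≤ k₁ ≤ k₂ ≤ … → ∞, a coupling (Ẑ₁^{k₁}, Ẑ₂^{k₂}, …, Ẑ) of Z₁^{k₁}, Z₂^{k₂}, …, Z, and an ℕ-valued random variable N such that Ẑₙ^{kₙ} = Ẑ^{kₙ} for all n ≥ N. -/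
open MeasureTheory Filter
open scoped ENNReal

lemma map_withDensity_comp {α β : Type*} [MeasurableSpace α] [MeasurableSpace β]
    (μ : Measure α) {g : α → β} (hg : Measurable g) {f : β → ℝ≥0∞} (hf : Measurable f) :
    (μ.withDensity (fun a => f (g a))).map g = (μ.map g).withDensity f := by
  ext A hA
  rw [Measure.map_apply hg hA, withDensity_apply _ hA, withDensity_apply _ (hg hA),
    setLIntegral_map hA hf hg]

lemma rnDeriv_mono_of_le {α : Type*} [MeasurableSpace α] {μ ν lam : Measure α}
    [IsFiniteMeasure μ] [IsFiniteMeasure ν] [SigmaFinite lam] (h : μ ≤ ν) :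
    μ.rnDeriv lam ≤ᵐ[lam] ν.rnDeriv lam := by
  have h1 : ν - μ + μ = ν := Measure.sub_add_cancel_of_le h
  have h2 := Measure.rnDeriv_add (ν - μ) μ lam
  rw [h1] at h2
  filter_upwards [h2] with x hx
  rw [hx]; exact le_add_self

lemma convInDensity_of_coupling {Ω α : Type*} [MeasurableSpace Ω] [MeasurableSpace α]
    (Pr : Measure Ω) [IsProbabilityMeasure Pr]
    (μs : ℕ → Measure α) (μ : Measure α)
    [∀ n, IsProbabilityMeasure (μs n)] [IsProbabilityMeasure μ]
    (W : Ω → α) (Ws : ℕ → Ω → α) (N : Ω → ℕ) (M : ℕ)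
    (hW : Measurable W) (hWs : ∀ n, Measurable (Ws n)) (hN : Measurable N)
    (hlaw : ∀ n, M ≤ n → Pr.map (Ws n) = μs n) (hμ : Pr.map W = μ)
    (heq : ∀ᵐ ω ∂Pr, ∀ n, N ω ≤ n → M ≤ n → Ws n ω = W ω) :
    ConvInDensity μs μ := by
  classical
  set lam : Measure α := μ + Measure.sum (fun n => ((2:ℝ≥0∞)⁻¹)^n • μs n) with hlam
  have hfin : IsFiniteMeasure lam := by
    constructor
    rw [hlam]
    simp only [Measure.add_apply, Measure.sum_apply _ MeasurableSet.univ, Measure.smul_apply,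
      smul_eq_mul, measure_univ, mul_one]
    rw [ENNReal.tsum_geometric]
    have : (1:ℝ≥0∞) - 2⁻¹ = 2⁻¹ := by
      rw [ENNReal.sub_eq_of_eq_add (by norm_num)]
      rw [ENNReal.inv_two_add_inv_two]
    rw [this]
    norm_num
  haveI := hfin
  have hACs : ∀ n, μs n ≪ lam := by
    intro n
    have h1 : μs n ≤ ((2:ℝ≥0∞)^n) • lam := by
      have h2 : ((2:ℝ≥0∞)⁻¹)^n • μs n ≤ lam :=
        le_trans (Measure.le_sum (fun m => ((2:ℝ≥0∞)⁻¹)^m • μs m) n)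
          (Measure.le_add_left le_rfl)
      calc μs n = ((2:ℝ≥0∞)^n) • (((2:ℝ≥0∞)⁻¹)^n • μs n) := by
            rw [smul_smul, ← mul_pow, ENNReal.mul_inv_cancel (by norm_num) (by norm_num),
              one_pow, one_smul]
        _ ≤ ((2:ℝ≥0∞)^n) • lam := by
            refine Measure.le_iff'.mpr (fun s => ?_)
            simp only [Measure.smul_apply, smul_eq_mul]
            exact mul_le_mul_right (Measure.le_iff'.mp h2 s) _
    refine Measure.AbsolutelyContinuous.mk (fun s hs h0 => ?_)
    have := h1 s
    simp only [Measure.smul_apply, smul_eq_mul, h0, mul_zero] at this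
    exact le_antisymm this zero_le
  have hAC : μ ≪ lam := Measure.absolutelyContinuous_of_le (Measure.le_add_right le_rfl)
  set f : ℕ → α → ℝ≥0∞ := fun n => (μs n).rnDeriv lam with hf
  set g : α → ℝ≥0∞ := μ.rnDeriv lam with hg
  have hfrep : ∀ n, μs n = lam.withDensity (f n) := fun n =>
    (Measure.withDensity_rnDeriv_eq _ _ (hACs n)).symm
  have hgrep : μ = lam.withDensity g := (Measure.withDensity_rnDeriv_eq _ _ hAC).symm
  -- the partial couplings
  set S : ℕ → Set Ω := fun n => {ω | N ω ≤ n} with hS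
  have hSmeas : ∀ n, MeasurableSet (S n) := fun n => hN measurableSet_Iic
  set σ : ℕ → Measure α := fun n => if n < M then 0 else (Pr.restrict (S n)).map W with hσ
  have hσ_mono : Monotone σ := by
    intro m n hmn
    simp only [hσ]
    split_ifs with h1 h2
    · exact le_rfl
    · exact Measure.zero_le _
    · omega
    · refine Measure.map_mono (Measure.restrict_mono (fun ω hω => ?_) le_rfl) hW
      exact le_trans hω hmn
  have hσ_le_μ : ∀ n, σ n ≤ μ := by
    intro n
    simp only [hσ]
    split_ifs with h1
    · exact Measure.zero_le _
    · rw [← hμ]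
      exact Measure.map_mono Measure.restrict_le_self hW
  haveI hσfin : ∀ n, IsFiniteMeasure (σ n) := by
    intro n
    exact MeasureTheory.isFiniteMeasure_of_le μ (hσ_le_μ n)
  have hσ_le_μs : ∀ n, M ≤ n → σ n ≤ μs n := by
    intro n hn
    have h1 : σ n = (Pr.restrict (S n)).map (Ws n) := by
      simp only [hσ, if_neg (not_lt.mpr hn)]
      refine Measure.map_congr ?_
      rw [Filter.EventuallyEq, ae_restrict_iff' (hSmeas n)]
      filter_upwards [heq] with ω hω hωS
      exact (hω n hωS hn).symm
    rw [h1, ← hlaw n hn]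
    exact Measure.map_mono Measure.restrict_le_self (hWs n)
  set u : ℕ → α → ℝ≥0∞ := fun n => (σ n).rnDeriv lam with hu
  have hu_meas : ∀ n, Measurable (u n) := fun n => Measure.measurable_rnDeriv _ _
  have hσAC : ∀ n, σ n ≪ lam := fun n => (Measure.absolutelyContinuous_of_le (hσ_le_μ n)).trans hAC
  have hu_le_f : ∀ n, M ≤ n → u n ≤ᵐ[lam] f n := fun n hn => rnDeriv_mono_of_le (hσ_le_μs n hn)
  have hu_mono : ∀ n, u n ≤ᵐ[lam] u (n+1) := fun n =>
    rnDeriv_mono_of_le (hσ_mono (Nat.le_succ n))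
  have hu_le_g : ∀ n, u n ≤ᵐ[lam] g := fun n => rnDeriv_mono_of_le (hσ_le_μ n)
  have hint : ∀ n, M ≤ n → ∫⁻ x, u n x ∂lam = Pr (S n) := by
    intro n hn
    rw [hu]
    rw [Measure.lintegral_rnDeriv (hσAC n)]
    simp only [hσ, if_neg (not_lt.mpr hn)]
    rw [Measure.map_apply hW MeasurableSet.univ]
    simp
  -- the monotone regularization of u
  set v : ℕ → α → ℝ≥0∞ := fun n x => ⨆ j : Fin (n+1), u j x with hv
  have hv_meas : ∀ n, Measurable (v n) := fun n => Measurable.iSup (fun j => hu_meas j)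
  have hv_mono : ∀ x, Monotone (fun n => v n x) := by
    intro x m n hmn
    exact iSup_le fun j => le_iSup_of_le (Fin.castLE (by omega) j) le_rfl
  have hu_mono_ae : ∀ᵐ x ∂lam, ∀ n, u n x ≤ u (n+1) x := ae_all_iff.mpr hu_mono
  have hvu : ∀ n, v n =ᵐ[lam] u n := by
    intro n
    filter_upwards [hu_mono_ae] with x hx
    have hmx : Monotone (fun n => u n x) := monotone_nat_of_le_succ hx
    refine le_antisymm (iSup_le fun j => hmx (by omega)) ?_
    exact le_iSup_of_le (Fin.last n) le_rfl
  set U : α → ℝ≥0∞ := fun x => ⨆ n, v n x with hU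
  have hU_meas : Measurable U := Measurable.iSup hv_meas
  have hU_le_g : U ≤ᵐ[lam] g := by
    have h1 : ∀ᵐ x ∂lam, ∀ n, u n x ≤ g x := ae_all_iff.mpr hu_le_g
    filter_upwards [h1] with x hx
    exact iSup_le fun n => iSup_le fun j => hx j
  have hg_int : ∫⁻ x, g x ∂lam = 1 := by
    rw [hg, Measure.lintegral_rnDeriv hAC]; simp
  have hU_int_ge : (1:ℝ≥0∞) ≤ ∫⁻ x, U x ∂lam := by
    have h1 : ∫⁻ x, U x ∂lam = ⨆ n, ∫⁻ x, v n x ∂lam :=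
      lintegral_iSup hv_meas (fun m n hmn => fun x => hv_mono x hmn)
    rw [h1]
    have h2 : ∀ n, ∫⁻ x, v n x ∂lam = ∫⁻ x, u n x ∂lam := fun n => lintegral_congr_ae (hvu n)
    have h3 : (1:ℝ≥0∞) = ⨆ n, Pr (S n) := by
      have : (⋃ n, S n) = Set.univ := by
        ext ω; simp only [Set.mem_iUnion, Set.mem_univ, iff_true]
        exact ⟨N ω, show N ω ≤ N ω from le_rfl⟩
      have hSmono : Monotone S := fun m n hmn ω hω =>
        show N ω ≤ n from le_trans (show N ω ≤ m from hω) hmn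
      rw [← measure_univ (μ := Pr), ← this, (hSmono.directed_le).measure_iUnion]
    rw [h3]
    refine iSup_le fun n => ?_
    have h4 : Pr (S n) ≤ Pr (S (max n M)) := measure_mono (fun ω hω =>
      show N ω ≤ max n M from le_trans (show N ω ≤ n from hω) (le_max_left _ _))
    refine le_trans h4 ?_
    rw [← hint (max n M) (le_max_right _ _), ← h2 (max n M)]
    exact le_iSup (fun n => ∫⁻ x, v n x ∂lam) (max n M)
  have hU_eq_g : U =ᵐ[lam] g := by
    have hUg : ∫⁻ x, U x ∂lam ≤ 1 := by
      rw [← hg_int]; exact lintegral_mono_ae hU_le_g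
    have hUint : ∫⁻ x, U x ∂lam = 1 := le_antisymm hUg hU_int_ge
    have hsub : ∫⁻ x, (g x - U x) ∂lam = 0 := by
      rw [lintegral_sub hU_meas (by rw [hUint]; norm_num) hU_le_g, hUint, hg_int, tsub_self]
    have h0 : (fun x => g x - U x) =ᵐ[lam] 0 := by
      rw [← lintegral_eq_zero_iff (f := fun x => g x - U x) ((Measure.measurable_rnDeriv _ _).sub hU_meas)] at *
      exact hsub
    filter_upwards [h0, hU_le_g] with x hx hx2
    have : g x - U x = 0 := hx
    exact le_antisymm hx2 (tsub_eq_zero_iff_le.mp this)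
  -- lower bound on liminf
  have hlower : ∀ᵐ x ∂lam, g x ≤ liminf (fun n => f n x) atTop := by
    have h1 : ∀ᵐ x ∂lam, ∀ n, M ≤ n → u n x ≤ f n x := by
      rw [ae_all_iff]
      intro n
      by_cases hn : M ≤ n
      · filter_upwards [hu_le_f n hn] with x hx _; exact hx
      · filter_upwards with x hx; omega
    filter_upwards [h1, hu_mono_ae, hU_eq_g] with x hx hmx hUx
    have hmono : Monotone (fun n => u n x) := monotone_nat_of_le_succ hmx
    have hlim : liminf (fun n => u n x) atTop = ⨆ n, u n x :=
      (tendsto_atTop_iSup hmono).liminf_eq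
    have hUx' : (⨆ n, u n x) = g x := by
      rw [← hUx, hU]
      refine le_antisymm (iSup_le fun n => le_iSup_of_le n (le_iSup_of_le (Fin.last n) le_rfl)) ?_
      exact iSup_le fun n => iSup_le fun j => le_iSup (fun n => u n x) j
    calc g x = liminf (fun n => u n x) atTop := by rw [hlim, hUx']
      _ ≤ liminf (fun n => f n x) atTop := by
          refine liminf_le_liminf (eventually_atTop.mpr ⟨M, fun n hn => hx n hn⟩)
  -- conclude liminf = g a.e.
  have hf_meas : ∀ n, Measurable (f n) := fun n => Measure.measurable_rnDeriv _ _
  have hL_meas : Measurable (fun x => liminf (fun n => f n x) atTop) :=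
    Measurable.liminf hf_meas
  have hupper : ∫⁻ x, liminf (fun n => f n x) atTop ∂lam ≤ 1 := by
    refine le_trans (lintegral_liminf_le hf_meas) ?_
    have : ∀ n, ∫⁻ x, f n x ∂lam = 1 := by
      intro n
      rw [hf, Measure.lintegral_rnDeriv (hACs n)]; simp
    simp only [this]
    simp [liminf_const]
  have hfinal : ∀ᵐ x ∂lam, liminf (fun n => f n x) atTop = g x := by
    have hsub : ∫⁻ x, (liminf (fun n => f n x) atTop - g x) ∂lam = 0 := by
      have := lintegral_sub (Measure.measurable_rnDeriv _ _) (by rw [hg_int]; norm_num)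
        hlower
      rw [this, hg_int]
      exact tsub_eq_zero_iff_le.mpr hupper
    have h0 : (fun x => liminf (fun n => f n x) atTop - g x) =ᵐ[lam] 0 := by
      rw [← lintegral_eq_zero_iff (f := fun x => liminf (fun n => f n x) atTop - g x) (hL_meas.sub (Measure.measurable_rnDeriv _ _))] at *
      exact hsub
    filter_upwards [h0, hlower] with x hx hx2
    exact le_antisymm (tsub_eq_zero_iff_le.mp hx) hx2
  exact ⟨lam, f, g, inferInstance, hf_meas, Measure.measurable_rnDeriv _ _, hfrep, hgrep, hfinal⟩

lemma pi_map_eval {ι : Type*} [Fintype ι] {α : ι → Type*} [∀ i, MeasurableSpace (α i)]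
    (μ : ∀ i, Measure (α i)) [∀ i, IsProbabilityMeasure (μ i)] (i : ι) :
    (Measure.pi μ).map (fun y => y i) = μ i := by
  classical
  ext A hA
  rw [Measure.map_apply (measurable_pi_apply i) hA]
  have h1 : (fun y : ∀ j, α j => y i) ⁻¹' A
      = Set.pi Set.univ (Function.update (fun j => (Set.univ : Set (α j))) i A) := by
    ext y
    simp only [Set.mem_preimage, Set.mem_pi, Set.mem_univ, forall_true_left]
    constructor
    · intro hy j
      by_cases hj : j = i
      · subst hj; simpa using hy
      · simp [Function.update_of_ne hj]
    · intro hy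
      have := hy i
      simpa using this
  rw [h1, Measure.pi_pi]
  rw [Fintype.prod_eq_single i (fun j hj => by simp [Function.update_of_ne hj])]
  simp

lemma tsum_split_nat (F : ℕ → ℝ≥0∞) (n : ℕ) :
    ∑' m, F m = (∑ m ∈ Finset.range (n+1), F m) + ∑' i, F (i + (n+1)) :=
  (Summable.sum_add_tsum_nat_add' (f := F) (k := n+1) ENNReal.summable).symm

def proj (E : ℕ → Type) (Einf : Type) (k : ℕ) (z : (∀ i, E i) × Einf) :
    ∀ i : Fin k, E i := fun i => z.1 i

lemma measurable_proj (E : ℕ → Type) [∀ i, MeasurableSpace (E i)]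
    (Einf : Type) [MeasurableSpace Einf] (k : ℕ) :
    Measurable (proj E Einf k) :=
  measurable_pi_lambda _ (fun i => (measurable_pi_apply (i:ℕ)).comp measurable_fst)

set_option maxHeartbeats 2000000 in
/-- Discrete-time version (Corollary 1): `Zₙᵏ → Zᵏ` in density for every `k` iff
there exist integers `0 ≤ k₁ ≤ k₂ ≤ … → ∞`, a coupling
`(Ẑ₁^{k₁}, Ẑ₂^{k₂}, …, Ẑ)` of `Z₁^{k₁}, Z₂^{k₂}, …, Z`, and an `ℕ`-valued random
variable `N` such that `Ẑₙ^{kₙ} = Ẑ^{kₙ}` for all `n ≥ N`. -/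
theorem stmt11 (E : ℕ → Type) [∀ i, MeasurableSpace (E i)]
    (Einf : Type) [MeasurableSpace Einf]
    (Qn : ℕ → Measure ((∀ i, E i) × Einf)) (Q : Measure ((∀ i, E i) × Einf))
    [∀ n, IsProbabilityMeasure (Qn n)] [IsProbabilityMeasure Q] :
    (∀ k : ℕ, ConvInDensity (fun n => (Qn n).map (proj E Einf k))
        (Q.map (proj E Einf k))) ↔
      ∃ k : ℕ → ℕ, Monotone k ∧ Tendsto k atTop atTop ∧
        ∃ (Ω : Type) (_ : MeasurableSpace Ω) (Pr : Measure Ω),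
          IsProbabilityMeasure Pr ∧
          ∃ (Zh : ∀ n, Ω → (∀ i : Fin (k n), E i)) (Z : Ω → (∀ i, E i) × Einf)
            (N : Ω → ℕ),
            (∀ n, Measurable (Zh n)) ∧ Measurable Z ∧ Measurable N ∧
            (∀ n, Pr.map (Zh n) = (Qn n).map (proj E Einf (k n))) ∧
            Pr.map Z = Q ∧
            (∀ᵐ ω ∂Pr, ∀ n, N ω ≤ n → Zh n ω = proj E Einf (k n) (Z ω)) := by
  classical
  constructor
  · intro hconv
    haveI hQk : ∀ kk, IsProbabilityMeasure (Q.map (proj E Einf kk)) := fun kk =>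
      Measure.isProbabilityMeasure_map (measurable_proj E Einf kk).aemeasurable
    haveI hQnk : ∀ kk n, IsProbabilityMeasure ((Qn n).map (proj E Einf kk)) := fun kk n =>
      Measure.isProbabilityMeasure_map (measurable_proj E Einf kk).aemeasurable
    choose lam fd gd hsf hfm hgm hfrep hgrep hlim using hconv
    haveI := hsf
    -- the functions h
    set hh : ∀ kk : ℕ, ℕ → (∀ i : Fin kk, E i) → ℝ≥0∞ :=
      fun kk n b => min (⨅ m, fd kk (m + n) b) (gd kk b) with hhh
    have hh_meas : ∀ kk n, Measurable (hh kk n) := fun kk n =>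
      (Measurable.iInf (fun m => hfm kk (m + n))).min (hgm kk)
    have hh_mono : ∀ kk b, Monotone (fun n => hh kk n b) := by
      intro kk b m n hmn
      refine min_le_min ?_ le_rfl
      refine le_iInf fun j => iInf_le_of_le (j + (n - m)) (le_of_eq ?_)
      congr 1; omega
    have hh_le_g : ∀ kk n b, hh kk n b ≤ gd kk b := fun kk n b => min_le_right _ _
    have hh_le_f : ∀ kk n j, n ≤ j → ∀ b, hh kk n b ≤ fd kk j b := by
      intro kk n j hnj b
      refine le_trans (min_le_left _ _) (le_trans (iInf_le _ (j - n)) (le_of_eq ?_))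
      congr 1; omega
    have hg_int : ∀ kk, ∫⁻ b, gd kk b ∂(lam kk) = 1 := by
      intro kk
      have : (lam kk).withDensity (gd kk) Set.univ = 1 := by
        rw [← hgrep kk]; simp
      rwa [withDensity_apply _ MeasurableSet.univ, setLIntegral_univ] at this
    have hf_int : ∀ kk n, ∫⁻ b, fd kk n b ∂(lam kk) = 1 := by
      intro kk n
      have : (lam kk).withDensity (fd kk n) Set.univ = 1 := by
        rw [← hfrep kk n]; simp
      rwa [withDensity_apply _ MeasurableSet.univ, setLIntegral_univ] at this
    have hg_fin : ∀ kk, ∀ᵐ b ∂(lam kk), gd kk b ≠ ∞ := by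
      intro kk
      filter_upwards [ae_lt_top (hgm kk) (by rw [hg_int kk]; norm_num)] with b hb
      exact hb.ne
    -- the a_{n,k} and their convergence to 1
    set a : ℕ → ℕ → ℝ≥0∞ := fun kk n => ∫⁻ b, hh kk n b ∂(lam kk) with ha
    have ha_mono : ∀ kk, Monotone (a kk) := fun kk m n hmn =>
      lintegral_mono (fun b => hh_mono kk b hmn)
    have hsup_hh : ∀ kk, ∀ᵐ b ∂(lam kk), (⨆ n, hh kk n b) = gd kk b := by
      intro kk
      filter_upwards [hlim kk] with b hb
      have h1 : (⨆ n, hh kk n b) = min (⨆ n, ⨅ m, fd kk (m + n) b) (gd kk b) := by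
        simp only [hhh]
        rw [← iSup_inf_eq (f := fun n => ⨅ m, fd kk (m + n) b) (a := gd kk b)]
      have h2 : (⨆ n, ⨅ m, fd kk (m + n) b) = liminf (fun n => fd kk n b) atTop :=
        (liminf_eq_iSup_iInf_of_nat' (u := fun n => fd kk n b)).symm
      rw [h1, h2, hb, min_self]
    have ha_sup : ∀ kk, (⨆ n, a kk n) = 1 := by
      intro kk
      rw [ha]
      have h1 : (⨆ n, ∫⁻ b, hh kk n b ∂(lam kk)) = ∫⁻ b, ⨆ n, hh kk n b ∂(lam kk) :=
        (lintegral_iSup (hh_meas kk) (fun m n hmn b => hh_mono kk b hmn)).symm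
      rw [h1, lintegral_congr_ae (hsup_hh kk), hg_int kk]
    -- choice of the indices nseq
    have hex : ∀ kk j0, ∃ j, j0 < j ∧ 1 - (2:ℝ≥0∞)⁻¹^kk ≤ a kk j := by
      intro kk j0
      have h1 : 1 - (2:ℝ≥0∞)⁻¹^kk < 1 := by
        refine ENNReal.sub_lt_self (by norm_num) (by norm_num) ?_
        exact pow_ne_zero _ (by norm_num)
      have h2 : 1 - (2:ℝ≥0∞)⁻¹^kk < ⨆ n, a kk n := by rw [ha_sup kk]; exact h1
      obtain ⟨j, hj⟩ := lt_iSup_iff.mp h2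
      exact ⟨max j (j0 + 1), by omega, le_trans hj.le (ha_mono kk (le_max_left _ _))⟩
    set nseq : ℕ → ℕ := fun k => Nat.rec 0 (fun j ih => Classical.choose (hex (j+1) ih)) k
      with hnseq
    have hnseq_succ : ∀ j, nseq j < nseq (j + 1) ∧
        1 - (2:ℝ≥0∞)⁻¹^(j+1) ≤ a (j+1) (nseq (j+1)) := fun j =>
      Classical.choose_spec (hex (j+1) (nseq j))
    have hnseq_strict : StrictMono nseq := strictMono_nat_of_lt_succ (fun j => (hnseq_succ j).1)
    have hnseq_bound : ∀ kk, 1 - (2:ℝ≥0∞)⁻¹^kk ≤ a kk (nseq kk) := by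
      intro kk
      cases kk with
      | zero => simp
      | succ j => exact (hnseq_succ j).2
    set kfun : ℕ → ℕ := fun j => Nat.findGreatest (fun k => nseq k ≤ j) j with hkfun
    have hkfun_le : ∀ j, nseq (kfun j) ≤ j := by
      intro j
      exact Nat.findGreatest_spec (P := fun k => nseq k ≤ j) (Nat.zero_le j)
        (show nseq 0 ≤ j from Nat.zero_le j)
    have hkfun_mono : Monotone kfun := by
      intro i j hij
      exact Nat.findGreatest_mono (fun k hk => le_trans hk hij) hij
    have hkfun_ge : ∀ K j, nseq K ≤ j → K ≤ kfun j := by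
      intro K j hj
      exact Nat.le_findGreatest (le_trans (hnseq_strict.le_apply) hj) hj
    have hkfun_tendsto : Tendsto kfun atTop atTop := by
      refine tendsto_atTop_atTop.mpr fun K => ⟨nseq K, fun j hj => hkfun_ge K j hj⟩
    -- the base space is nonempty
    have hne : Nonempty ((∀ i, E i) × Einf) := by
      by_contra hemp
      rw [not_nonempty_iff] at hemp
      have h1 : (Set.univ : Set ((∀ i, E i) × Einf)) = ∅ := Set.univ_eq_empty_iff.mpr hemp
      have h2 := measure_univ (μ := Q)
      rw [h1, measure_empty] at h2
      norm_num at h2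
    obtain ⟨z₀⟩ := hne
    -- the functions t and r
    set t : ℕ → ((∀ i, E i) × Einf) → ℝ≥0∞ := fun kk z =>
      hh kk (nseq kk) (proj E Einf kk z) / gd kk (proj E Einf kk z) with ht
    have ht_le_one : ∀ kk z, t kk z ≤ 1 := by
      intro kk z
      refine ENNReal.div_le_of_le_mul ?_
      rw [one_mul]
      exact hh_le_g kk _ _
    have ht_meas : ∀ kk, Measurable (t kk) := fun kk =>
      ((hh_meas kk (nseq kk)).div (hgm kk)).comp (measurable_proj E Einf kk)
    have hdiv_meas : ∀ kk, Measurable (fun b => hh kk (nseq kk) b / gd kk b) := fun kk =>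
      (hh_meas kk (nseq kk)).div (hgm kk)
    have hgmul : ∀ kk n, ∀ᵐ b ∂(lam kk), gd kk b * (hh kk n b / gd kk b) = hh kk n b := by
      intro kk n
      filter_upwards [hg_fin kk] with b hb
      by_cases h0 : gd kk b = 0
      · have : hh kk n b = 0 := le_antisymm (h0 ▸ hh_le_g kk n b) zero_le
        simp [h0, this]
      · exact ENNReal.mul_div_cancel h0 hb
    have ht_int : ∀ kk, ∫⁻ z, t kk z ∂Q = a kk (nseq kk) := by
      intro kk
      have h1 : ∫⁻ z, t kk z ∂Q
          = ∫⁻ b, hh kk (nseq kk) b / gd kk b ∂(Q.map (proj E Einf kk)) :=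
        (lintegral_map (hdiv_meas kk) (measurable_proj E Einf kk)).symm
      rw [h1, hgrep kk, lintegral_withDensity_eq_lintegral_mul _ (hgm kk) (hdiv_meas kk)]
      exact lintegral_congr_ae (hgmul kk (nseq kk))
    -- Borel-Cantelli: t kk → 1 a.e.
    have hBC : ∀ᵐ z ∂Q, Tendsto (fun kk => t kk z) atTop (nhds 1) := by
      have hsub_int : ∀ kk, ∫⁻ z, (1 - t kk z) ∂Q ≤ (2:ℝ≥0∞)⁻¹^kk := by
        intro kk
        rw [lintegral_sub (ht_meas kk) (by
            rw [ht_int kk]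
            exact ne_top_of_le_ne_top (by norm_num)
              (le_trans (le_iSup (a kk) (nseq kk)) (le_of_eq (ha_sup kk))))
          (Filter.Eventually.of_forall (fun z => ht_le_one kk z)), lintegral_one, measure_univ]
        calc (1:ℝ≥0∞) - ∫⁻ z, t kk z ∂Q ≤ 1 - (1 - (2:ℝ≥0∞)⁻¹^kk) := by
              gcongr
              rw [ht_int kk]
              exact hnseq_bound kk
          _ ≤ (2:ℝ≥0∞)⁻¹^kk := by
              refine tsub_le_iff_right.mpr ?_
              rw [add_comm, tsub_add_cancel_of_le]
              exact pow_le_one' (by norm_num) kk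
      have htsum : ∫⁻ z, ∑' kk, (1 - t kk z) ∂Q ≠ ∞ := by
        rw [lintegral_tsum (f := fun kk z => 1 - t kk z) (fun kk => ((measurable_const.sub (ht_meas kk)).aemeasurable))]
        refine ne_top_of_le_ne_top ?_ (ENNReal.tsum_le_tsum hsub_int)
        rw [ENNReal.tsum_geometric]
        have h2 : (1:ℝ≥0∞) - 2⁻¹ = 2⁻¹ := by
          rw [← ENNReal.inv_two_add_inv_two, ENNReal.add_sub_cancel_right (by norm_num)]
        rw [h2]
        norm_num
      have hae : ∀ᵐ z ∂Q, ∑' kk, (1 - t kk z) ≠ ∞ := by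
        filter_upwards [ae_lt_top (Measurable.ennreal_tsum
          (fun kk => measurable_const.sub (ht_meas kk))) htsum] with z hz
        exact hz.ne
      filter_upwards [hae] with z hz
      have h3 : Tendsto (fun kk => 1 - t kk z) atTop (nhds 0) :=
        ENNReal.tendsto_atTop_zero_of_tsum_ne_top hz
      have h4 : ∀ kk, t kk z = 1 - (1 - t kk z) :=
        fun kk => (ENNReal.sub_sub_cancel (by norm_num) (ht_le_one kk z)).symm
      have h5 : Tendsto (fun kk => 1 - (1 - t kk z)) atTop (nhds 1) := by
        have := ENNReal.Tendsto.sub (tendsto_const_nhds (x := (1:ℝ≥0∞))) h3 (Or.inl (by norm_num))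
        simpa using this
      exact h5.congr (fun kk => (h4 kk).symm)
    -- the function r
    set r : ℕ → ((∀ i, E i) × Einf) → ℝ≥0∞ := fun m z => ⨅ j, t (kfun (j + m)) z with hr
    have hr_meas : ∀ m, Measurable (r m) := fun m =>
      Measurable.iInf (fun j => ht_meas (kfun (j + m)))
    have hr_mono : ∀ z, Monotone (fun m => r m z) := by
      intro z m n hmn
      refine le_iInf fun j => ?_
      refine le_trans (iInf_le _ (j + (n - m))) (le_of_eq ?_)
      congr 2; omega
    have hr_le_t : ∀ m z, r m z ≤ t (kfun m) z := fun m z =>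
      le_trans (iInf_le _ 0) (le_of_eq (by rw [Nat.zero_add]))
    have hr_le_one : ∀ m z, r m z ≤ 1 := fun m z => le_trans (hr_le_t m z) (ht_le_one _ z)
    have hsupr : ∀ᵐ z ∂Q, (⨆ m, r m z) = 1 := by
      filter_upwards [hBC] with z hz
      refine le_antisymm (iSup_le fun m => hr_le_one m z) ?_
      have h1 : liminf (fun kk => t kk z) atTop = 1 := hz.liminf_eq
      rw [← h1, liminf_eq_iSup_iInf_of_nat' (u := fun kk => t kk z)]
      refine iSup_le fun K => ?_
      refine le_trans ?_ (le_iSup _ (nseq K))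
      refine le_iInf fun j => ?_
      have h2 : K ≤ kfun (j + nseq K) := hkfun_ge K _ (by omega)
      refine le_trans (iInf_le _ (kfun (j + nseq K) - K)) (le_of_eq ?_)
      congr 1; omega
    -- the increments d
    set d : ℕ → ((∀ i, E i) × Einf) → ℝ≥0∞ :=
      fun m z => r m z - (if m = 0 then 0 else r (m-1) z) with hd
    have hd_meas : ∀ m, Measurable (d m) := by
      intro m
      cases m with
      | zero => simpa [hd] using hr_meas 0
      | succ j => rw [show d (j+1) = r (j+1) - r j from funext fun z => by simp [hd]]; exact (hr_meas (j+1)).sub (hr_meas j)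
    have hd_le_r : ∀ m z, d m z ≤ r m z := fun m z => tsub_le_self
    have hd_le_one : ∀ m z, d m z ≤ 1 := fun m z => le_trans (hd_le_r m z) (hr_le_one m z)
    have hd_sum : ∀ m z, ∑ i ∈ Finset.range (m+1), d i z = r m z := by
      intro m z
      induction m with
      | zero => simp [hd]
      | succ j ih =>
          rw [Finset.sum_range_succ, ih]
          have : d (j+1) z = r (j+1) z - r j z := by simp [hd]
          rw [this, add_comm, tsub_add_cancel_of_le (hr_mono z (by omega))]
    have hsum_shift : ∀ n z, ∑' i, d (i + (n+1)) z = (⨆ m, r m z) - r n z := by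
      intro n z
      have hpart : ∀ I, ∑ i ∈ Finset.range I, d (i + (n+1)) z = r (n+I) z - r n z := by
        intro I
        induction I with
        | zero => simp
        | succ J ih =>
            rw [Finset.sum_range_succ, ih]
            have h1 : d (J + (n+1)) z = r (n+J+1) z - r (n+J) z := by
              have h2 : J + (n+1) = (n+J)+1 := by omega
              rw [h2]; simp [hd]
            rw [h1]
            have hAB : r n z ≤ r (n+J) z := hr_mono z (by omega)
            have hBC : r (n+J) z ≤ r (n+J+1) z := hr_mono z (by omega)
            have h3 : (r (n+J+1) z - r (n+J) z) + (r (n+J) z - r n z) + r n z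
                = r (n+J+1) z := by
              rw [add_assoc, tsub_add_cancel_of_le hAB, tsub_add_cancel_of_le hBC]
            have h4 : r (n + (J+1)) z = r (n+J+1) z := by rw [show n + (J+1) = n+J+1 from rfl]
            rw [h4, add_comm, ← ENNReal.add_sub_cancel_right
              (a := (r (n+J+1) z - r (n+J) z) + (r (n+J) z - r n z)) (b := r n z)
              (ne_top_of_le_ne_top (by norm_num) (hr_le_one n z)), h3]
      rw [ENNReal.tsum_eq_iSup_nat]
      simp only [hpart]
      rw [← ENNReal.iSup_sub]
      congr 1
      refine le_antisymm (iSup_le fun I => le_iSup (f := fun m => r m z) (n+I)) (iSup_le fun m => ?_)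
      exact le_trans (hr_mono z (by omega : m ≤ n + m)) (le_iSup (fun I => r (n+I) z) m)
    have hd_tsum : ∀ z, ∑' m, d m z = ⨆ m, r m z := by
      intro z
      rw [ENNReal.tsum_eq_iSup_nat]
      refine le_antisymm (iSup_le fun n => ?_) (iSup_le fun m => ?_)
      · cases n with
        | zero => simp
        | succ j => rw [hd_sum j z]; exact le_iSup (f := fun m => r m z) j
      · rw [← hd_sum m z]; exact le_iSup (fun n => ∑ i ∈ Finset.range n, d i z) (m+1)
    -- the measures
    haveI hQd_fin : ∀ m, IsFiniteMeasure (Q.withDensity (d m)) := by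
      intro m
      refine isFiniteMeasure_withDensity ?_
      refine ne_top_of_le_ne_top (by norm_num : (1:ℝ≥0∞) ≠ ⊤) ?_
      calc ∫⁻ z, d m z ∂Q ≤ ∫⁻ _, 1 ∂Q := lintegral_mono (fun z => hd_le_one m z)
        _ = 1 := by simp
    haveI hQr_fin : ∀ m, IsFiniteMeasure (Q.withDensity (r m)) := by
      intro m
      refine isFiniteMeasure_withDensity ?_
      refine ne_top_of_le_ne_top (by norm_num : (1:ℝ≥0∞) ≠ ⊤) ?_
      calc ∫⁻ z, r m z ∂Q ≤ ∫⁻ _, 1 ∂Q := lintegral_mono (fun z => hr_le_one m z)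
        _ = 1 := by simp
    set mun : ∀ m : ℕ, Measure (∀ i : Fin (kfun m), E i) :=
      fun m => (Qn m).map (proj E Einf (kfun m)) with hmun
    set ρm : ∀ m : ℕ, Measure (∀ i : Fin (kfun m), E i) :=
      fun m => (Q.withDensity (r m)).map (proj E Einf (kfun m)) with hρm
    have hρ_le : ∀ m, ρm m ≤ mun m := by
      intro m
      have h1 : ρm m ≤ (Q.withDensity (fun z => hh (kfun m) (nseq (kfun m))
          (proj E Einf (kfun m) z) / gd (kfun m) (proj E Einf (kfun m) z))).map
          (proj E Einf (kfun m)) := by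
        refine Measure.map_mono (withDensity_mono (Filter.Eventually.of_forall
          (fun z => ?_))) (measurable_proj E Einf (kfun m))
        exact hr_le_t m z
      have h2 : (Q.withDensity (fun z => hh (kfun m) (nseq (kfun m))
          (proj E Einf (kfun m) z) / gd (kfun m) (proj E Einf (kfun m) z))).map
          (proj E Einf (kfun m))
          = (Q.map (proj E Einf (kfun m))).withDensity
              (fun b => hh (kfun m) (nseq (kfun m)) b / gd (kfun m) b) :=
        map_withDensity_comp Q (g := proj E Einf (kfun m))
          (f := fun b => hh (kfun m) (nseq (kfun m)) b / gd (kfun m) b)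
          (measurable_proj E Einf (kfun m)) (hdiv_meas (kfun m))
      have h3 : (Q.map (proj E Einf (kfun m))).withDensity
              (fun b => hh (kfun m) (nseq (kfun m)) b / gd (kfun m) b)
          = (lam (kfun m)).withDensity ((gd (kfun m)) *
              (fun b => hh (kfun m) (nseq (kfun m)) b / gd (kfun m) b)) := by
        rw [hgrep (kfun m), withDensity_mul _ (hgm (kfun m)) (hdiv_meas (kfun m))]
      have h4 : (lam (kfun m)).withDensity ((gd (kfun m)) *
              (fun b => hh (kfun m) (nseq (kfun m)) b / gd (kfun m) b))
          ≤ (lam (kfun m)).withDensity (fd (kfun m) m) := by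
        refine withDensity_mono ?_
        filter_upwards [hgmul (kfun m) (nseq (kfun m))] with b hb
        calc (gd (kfun m) * fun b => hh (kfun m) (nseq (kfun m)) b / gd (kfun m) b) b
            = hh (kfun m) (nseq (kfun m)) b := hb
          _ ≤ fd (kfun m) m b := hh_le_f (kfun m) (nseq (kfun m)) m (hkfun_le m) b
      refine le_trans h1 ?_
      rw [h2, h3]
      refine le_trans h4 (le_of_eq ?_)
      exact (hfrep (kfun m) m).symm
    haveI hρ_fin : ∀ m, IsFiniteMeasure (ρm m) := fun m =>
      MeasureTheory.isFiniteMeasure_of_le (mun m) (hρ_le m)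
    set ν : ∀ m : ℕ, Measure (∀ i : Fin (kfun m), E i) := fun m => mun m - ρm m with hν
    have hν_add : ∀ m, ν m + ρm m = mun m := fun m => Measure.sub_add_cancel_of_le (hρ_le m)
    set c : ℕ → ℝ≥0∞ := fun m => ν m Set.univ with hc
    have hν_le : ∀ m, ν m ≤ mun m := fun m => Measure.sub_le
    have hc_le_one : ∀ m, c m ≤ 1 := by
      intro m
      calc c m ≤ mun m Set.univ := Measure.le_iff'.mp (hν_le m) _
        _ = 1 := measure_univ
    have hc_ne_top : ∀ m, c m ≠ ∞ := fun m =>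
      ne_top_of_le_ne_top (by norm_num) (hc_le_one m)
    -- the extension maps and leftover measures θ
    set ext : ∀ m : ℕ, (∀ i : Fin (kfun m), E i) → ((∀ i, E i) × Einf) := fun m b =>
      ((fun i => if hi : i < kfun m then b ⟨i, hi⟩ else z₀.1 i), z₀.2) with hext
    have hext_meas : ∀ m, Measurable (ext m) := by
      intro m
      refine Measurable.prodMk ?_ measurable_const
      refine measurable_pi_lambda _ (fun i => ?_)
      by_cases hi : i < kfun m
      · simp only [dif_pos hi]; exact measurable_pi_apply _
      · simp only [dif_neg hi]; exact measurable_const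
    have hproj_ext : ∀ m b, proj E Einf (kfun m) (ext m b) = b := by
      intro m b
      funext i
      show (if hi : (i:ℕ) < kfun m then b ⟨i, hi⟩ else z₀.1 i) = b i
      rw [dif_pos i.isLt]
    set θ : ℕ → Measure ((∀ i, E i) × Einf) := fun m =>
      if c m = 0 then Q else (c m)⁻¹ • (ν m).map (ext m) with hθ
    haveI hθ_prob : ∀ m, IsProbabilityMeasure (θ m) := by
      intro m
      by_cases h : c m = 0
      · simp only [hθ, if_pos h]; infer_instance
      · simp only [hθ, if_neg h]
        constructor
        rw [Measure.smul_apply, Measure.map_apply (hext_meas m) MeasurableSet.univ]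
        simp only [Set.preimage_univ, smul_eq_mul]
        have hcm : ν m Set.univ = c m := rfl
        rw [hcm]
        exact ENNReal.inv_mul_cancel h (hc_ne_top m)
    have hθ_marg : ∀ m, c m ≠ 0 →
        (θ m).map (proj E Einf (kfun m)) = (c m)⁻¹ • ν m := by
      intro m h
      simp only [hθ, if_neg h]
      rw [Measure.map_smul]
      congr 1
      rw [Measure.map_map (measurable_proj E Einf (kfun m)) (hext_meas m)]
      have h1 : (proj E Einf (kfun m)) ∘ (ext m) = id := funext (hproj_ext m)
      rw [h1, Measure.map_id]
    -- the junk measures J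
    set fill : ∀ m : ℕ, (∀ _ : Fin m, ((∀ i, E i) × Einf)) → (ℕ → ((∀ i, E i) × Einf)) :=
      fun m y j => if hj : j < m then y ⟨j, hj⟩ else z₀ with hfill
    have hfill_meas : ∀ m, Measurable (fill m) := by
      intro m
      simp only [hfill]
      refine measurable_pi_lambda _ (fun j => ?_)
      by_cases hj : j < m
      · simp only [dif_pos hj]; exact measurable_pi_apply _
      · simp only [dif_neg hj]; exact measurable_const
    set J : ℕ → Measure (ℕ → ((∀ i, E i) × Einf)) := fun m =>
      (Measure.pi (fun i : Fin m => θ i)).map (fill m) with hJ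
    haveI hJ_prob : ∀ m, IsProbabilityMeasure (J m) := fun m =>
      Measure.isProbabilityMeasure_map (hfill_meas m).aemeasurable
    have hJ_marg : ∀ m j, j < m → (J m).map (fun y => y j) = θ j := by
      intro m j hj
      simp only [hJ]
      rw [Measure.map_map (measurable_pi_apply j) (hfill_meas m)]
      have h1 : (fun y : ℕ → ((∀ i, E i) × Einf) => y j) ∘ (fill m)
          = fun y => y ⟨j, hj⟩ := by
        funext y
        simp only [Function.comp_apply, hfill, dif_pos hj]
      rw [h1]
      exact pi_map_eval (fun i : Fin m => θ i) ⟨j, hj⟩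
    -- the coupling space and measure
    set embed : ∀ m : ℕ, (((∀ i, E i) × Einf) × (ℕ → ((∀ i, E i) × Einf))) →
        (((∀ i, E i) × Einf) × ℕ × (ℕ → ((∀ i, E i) × Einf))) :=
      fun m p => (p.1, m, p.2) with hembed
    have hembed_meas : ∀ m, Measurable (embed m) :=
      fun m => measurable_fst.prodMk (measurable_const.prodMk measurable_snd)
    set comp : ℕ → Measure (((∀ i, E i) × Einf) × ℕ × (ℕ → ((∀ i, E i) × Einf))) :=
      fun m => ((Q.withDensity (d m)).prod (J m)).map (embed m) with hcomp
    set Pr : Measure (((∀ i, E i) × Einf) × ℕ × (ℕ → ((∀ i, E i) × Einf))) :=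
      Measure.sum comp with hPr
    set ZH : ∀ n : ℕ, (((∀ i, E i) × Einf) × ℕ × (ℕ → ((∀ i, E i) × Einf))) →
        (∀ i : Fin (kfun n), E i) := fun n ω =>
      if ω.2.1 ≤ n then proj E Einf (kfun n) ω.1 else proj E Einf (kfun n) (ω.2.2 n)
      with hZH
    have hNset : ∀ n : ℕ, MeasurableSet {ω : (((∀ i, E i) × Einf) × ℕ ×
        (ℕ → ((∀ i, E i) × Einf))) | ω.2.1 ≤ n} := fun n =>
      (measurable_fst.comp measurable_snd) measurableSet_Iic
    have hZH_meas : ∀ n, Measurable (ZH n) := by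
      intro n
      simp only [hZH]
      exact Measurable.ite (hNset n) ((measurable_proj E Einf (kfun n)).comp measurable_fst)
        ((measurable_proj E Einf (kfun n)).comp
          ((measurable_pi_apply n).comp (measurable_snd.comp measurable_snd)))
    -- law of the first coordinate
    have hmapZ : Pr.map Prod.fst = Q := by
      ext A hA
      rw [Measure.map_apply measurable_fst hA, hPr, Measure.sum_apply _ (measurable_fst hA)]
      have hterm : ∀ m, comp m (Prod.fst ⁻¹' A) = (Q.withDensity (d m)) A := by
        intro m
        simp only [hcomp]
        rw [Measure.map_apply (hembed_meas m) (measurable_fst hA)]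
        have hpre : (embed m) ⁻¹' (Prod.fst ⁻¹' A)
            = A ×ˢ (Set.univ : Set (ℕ → ((∀ i, E i) × Einf))) := by
          ext p
          simp [hembed]
        rw [hpre, Measure.prod_prod, measure_univ, mul_one]
      simp only [hterm]
      have h1 : ∑' m, (Q.withDensity (d m)) A = Q.withDensity (fun z => ∑' m, d m z) A := by
        have h2 : (fun z => ∑' m, d m z) = ∑' m, d m := by
          funext z
          exact (ENNReal.tsum_apply).symm
        rw [h2, withDensity_tsum hd_meas, Measure.sum_apply _ hA]
      rw [h1]
      have h3 : (fun z => ∑' m, d m z) =ᵐ[Q] 1 := by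
        filter_upwards [hsupr] with z hz
        rw [hd_tsum z, hz]
        rfl
      rw [withDensity_congr_ae h3, withDensity_one]
    haveI hPr_prob : IsProbabilityMeasure Pr := by
      constructor
      have h1 : Pr Set.univ = Pr.map Prod.fst Set.univ := by
        rw [Measure.map_apply measurable_fst MeasurableSet.univ, Set.preimage_univ]
      rw [h1, hmapZ]
      exact measure_univ
    -- law of the n-th marginal
    have hmapZH : ∀ n, Pr.map (ZH n) = mun n := by
      intro n
      ext A hA
      have hBm : MeasurableSet (proj E Einf (kfun n) ⁻¹' A) :=
        (measurable_proj E Einf (kfun n)) hA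
      have hIn_le : ∫⁻ z, r n z ∂Q ≤ 1 := by
        calc ∫⁻ z, r n z ∂Q ≤ ∫⁻ _, 1 ∂Q := lintegral_mono (fun z => hr_le_one n z)
          _ = 1 := by simp
      have hρ_univ : ρm n Set.univ = ∫⁻ z, r n z ∂Q := by
        simp only [hρm]
        rw [Measure.map_apply (measurable_proj E Einf (kfun n)) MeasurableSet.univ,
          Set.preimage_univ, withDensity_apply _ MeasurableSet.univ, setLIntegral_univ]
      have hρmA : ρm n A = (Q.withDensity (r n)) (proj E Einf (kfun n) ⁻¹' A) := by
        simp only [hρm]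
        rw [Measure.map_apply (measurable_proj E Einf (kfun n)) hA]
      have hcn : c n = 1 - ∫⁻ z, r n z ∂Q := by
        have h2 := congrArg (fun μ => μ Set.univ) (hν_add n)
        simp only [Measure.add_apply] at h2
        rw [hρ_univ] at h2
        have h3 : mun n Set.univ = 1 := measure_univ
        rw [h3] at h2
        exact ENNReal.eq_sub_of_add_eq (ne_top_of_le_ne_top (by norm_num) hIn_le) h2
      rw [Measure.map_apply (hZH_meas n) hA, hPr, Measure.sum_apply _ ((hZH_meas n) hA)]
      have hterm : ∀ m, comp m (ZH n ⁻¹' A) = if m ≤ n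
          then (Q.withDensity (d m)) (proj E Einf (kfun n) ⁻¹' A)
          else (∫⁻ z, d m z ∂Q) * (θ n (proj E Einf (kfun n) ⁻¹' A)) := by
        intro m
        simp only [hcomp]
        rw [Measure.map_apply (hembed_meas m) ((hZH_meas n) hA)]
        by_cases hm : m ≤ n
        · rw [if_pos hm]
          have hpre : (embed m) ⁻¹' (ZH n ⁻¹' A)
              = (proj E Einf (kfun n) ⁻¹' A) ×ˢ
                (Set.univ : Set (ℕ → ((∀ i, E i) × Einf))) := by
            ext p
            simp [hembed, hZH, hm]
          rw [hpre, Measure.prod_prod, measure_univ, mul_one]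
        · rw [if_neg hm]
          have hpre : (embed m) ⁻¹' (ZH n ⁻¹' A)
              = (Set.univ : Set ((∀ i, E i) × Einf)) ×ˢ
                ((fun y : ℕ → ((∀ i, E i) × Einf) => y n) ⁻¹' (proj E Einf (kfun n) ⁻¹' A)) := by
            ext p
            simp [hembed, hZH, hm]
          rw [hpre, Measure.prod_prod]
          congr 1
          · rw [withDensity_apply _ MeasurableSet.univ, setLIntegral_univ]
          · rw [← Measure.map_apply (measurable_pi_apply n) hBm, hJ_marg m n (by omega)]
      simp only [hterm]
      rw [tsum_split_nat (fun m => if m ≤ n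
          then (Q.withDensity (d m)) (proj E Einf (kfun n) ⁻¹' A)
          else (∫⁻ z, d m z ∂Q) * (θ n (proj E Einf (kfun n) ⁻¹' A))) n]
      have hsum1 : ∑ m ∈ Finset.range (n+1), (if m ≤ n
          then (Q.withDensity (d m)) (proj E Einf (kfun n) ⁻¹' A)
          else (∫⁻ z, d m z ∂Q) * (θ n (proj E Einf (kfun n) ⁻¹' A)))
          = (Q.withDensity (r n)) (proj E Einf (kfun n) ⁻¹' A) := by
        rw [Finset.sum_congr rfl (fun m hm => if_pos (by
          simp only [Finset.mem_range] at hm; omega))]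
        have h4 : ∀ m, (Q.withDensity (d m)) (proj E Einf (kfun n) ⁻¹' A)
            = ∫⁻ z in (proj E Einf (kfun n) ⁻¹' A), d m z ∂Q :=
          fun m => withDensity_apply _ hBm
        simp only [h4]
        rw [← lintegral_finset_sum _ (fun m _ => hd_meas m)]
        rw [withDensity_apply _ hBm]
        refine lintegral_congr (fun z => ?_)
        exact hd_sum n z
      have hsum2 : ∑' i, (if i + (n+1) ≤ n
          then (Q.withDensity (d (i + (n+1)))) (proj E Einf (kfun n) ⁻¹' A)
          else (∫⁻ z, d (i + (n+1)) z ∂Q) * (θ n (proj E Einf (kfun n) ⁻¹' A)))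
          = c n * (θ n (proj E Einf (kfun n) ⁻¹' A)) := by
        rw [tsum_congr (fun i => if_neg (by omega))]
        rw [ENNReal.tsum_mul_right]
        congr 1
        rw [← lintegral_tsum (fun i => (hd_meas (i + (n+1))).aemeasurable)]
        have h5 : (fun z => ∑' i, d (i + (n+1)) z) =ᵐ[Q] (fun z => 1 - r n z) := by
          filter_upwards [hsupr] with z hz
          rw [hsum_shift n z, hz]
        rw [lintegral_congr_ae h5,
          lintegral_sub (hr_meas n) (ne_top_of_le_ne_top (by norm_num) hIn_le)
            (Filter.Eventually.of_forall (fun z => hr_le_one n z)),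
          lintegral_one, measure_univ, hcn]
      rw [hsum1, hsum2]
      by_cases hc0 : c n = 0
      · rw [hc0, zero_mul, add_zero, ← hρmA]
        have hν0 : ν n = 0 := Measure.measure_univ_eq_zero.mp hc0
        have h6 := hν_add n
        rw [hν0, zero_add] at h6
        rw [h6]
      · have h5 : θ n (proj E Einf (kfun n) ⁻¹' A)
            = ((θ n).map (proj E Einf (kfun n))) A :=
          (Measure.map_apply (measurable_proj E Einf (kfun n)) hA).symm
        rw [h5, hθ_marg n hc0, Measure.smul_apply, smul_eq_mul, ← mul_assoc,
          ENNReal.mul_inv_cancel hc0 (hc_ne_top n), one_mul, ← hρmA]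
        have h6 := congrArg (fun μ : Measure (∀ i : Fin (kfun n), E i) => μ A) (hν_add n)
        simp only [Measure.add_apply] at h6
        rw [add_comm]
        exact h6
    -- assembly
    refine ⟨kfun, hkfun_mono, hkfun_tendsto, _, inferInstance, Pr, hPr_prob,
      ZH, Prod.fst, (fun ω => ω.2.1), hZH_meas, measurable_fst,
      measurable_fst.comp measurable_snd, ?_, hmapZ, ?_⟩
    · intro n
      rw [hmapZH n]
    · refine Filter.Eventually.of_forall (fun ω n hn => ?_)
      simp only [hZH]
      rw [if_pos hn]
  · rintro ⟨k, hkmono, hktend, Ω, mΩ, Pr, hPr, Zh, Z, N, hZh, hZ, hN, hlawn, hlawZ, heq⟩ kk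
    haveI : IsProbabilityMeasure Pr := hPr
    obtain ⟨M, hM⟩ := Filter.eventually_atTop.mp (hktend.eventually_ge_atTop kk)
    haveI : ∀ n, IsProbabilityMeasure ((Qn n).map (proj E Einf kk)) := fun n =>
      Measure.isProbabilityMeasure_map (measurable_proj E Einf kk).aemeasurable
    haveI : IsProbabilityMeasure (Q.map (proj E Einf kk)) :=
      Measure.isProbabilityMeasure_map (measurable_proj E Einf kk).aemeasurable
    set Ws : ℕ → Ω → (∀ i : Fin kk, E i) := fun n ω =>
      if h : kk ≤ k n then (fun i => Zh n ω (Fin.castLE h i)) else proj E Einf kk (Z ω)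
      with hWs_def
    have htrunc_meas : ∀ n (h : kk ≤ k n),
        Measurable (fun (b : ∀ i : Fin (k n), E i) => (fun i : Fin kk => b (Fin.castLE h i))) :=
      fun n h => measurable_pi_lambda _ (fun i => measurable_pi_apply _)
    have hWs_meas : ∀ n, Measurable (Ws n) := by
      intro n
      by_cases h : kk ≤ k n
      · simp only [hWs_def, dif_pos h]
        exact (htrunc_meas n h).comp (hZh n)
      · simp only [hWs_def, dif_neg h]
        exact (measurable_proj E Einf kk).comp hZ
    have hWlaw : ∀ n, M ≤ n → Pr.map (Ws n) = (Qn n).map (proj E Einf kk) := by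
      intro n hn
      have h : kk ≤ k n := hM n hn
      have h1 : Ws n = (fun (b : ∀ i : Fin (k n), E i) => (fun i : Fin kk => b (Fin.castLE h i)))
          ∘ (Zh n) := by
        funext ω
        simp only [hWs_def, dif_pos h, Function.comp_apply]
      rw [h1, ← Measure.map_map (htrunc_meas n h) (hZh n), hlawn n,
        Measure.map_map (htrunc_meas n h) (measurable_proj E Einf (k n))]
      rfl
    have hWeq : ∀ᵐ ω ∂Pr, ∀ n, N ω ≤ n → M ≤ n →
        Ws n ω = proj E Einf kk (Z ω) := by
      filter_upwards [heq] with ω hω n h1 h2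
      have h : kk ≤ k n := hM n h2
      simp only [hWs_def, dif_pos h]
      rw [hω n h1]
      rfl
    have hWZ : Pr.map (fun ω => proj E Einf kk (Z ω)) = Q.map (proj E Einf kk) := by
      rw [show (fun ω => proj E Einf kk (Z ω)) = (proj E Einf kk) ∘ Z from rfl,
        ← Measure.map_map (measurable_proj E Einf kk) hZ, hlawZ]
    exact convInDensity_of_coupling Pr _ _ (fun ω => proj E Einf kk (Z ω)) Ws N M
      ((measurable_proj E Einf kk).comp hZ) hWs_meas hN hWlaw hWZ hWeq
end

section
/- Let E be a metric space, P a Borel probability measure on E concentrated on a separable Borel set E₀. Then there exists a nested sequence of countable Borel partitions {A_{i₁…i_k} : (i₁,…,i_k) ∈ ℕᵏ}, k ∈ ℕ, of E into P-continuity sets such that A_{i₁…i_k} = ⋃_{j∈ℕ} A_{i₁…i_k j} for all k and indices, and for each k the sets A_{i₁…i_k} with all indices i₁,…,i_k ≥ 2 cover E₀ and each have diameter < 1/k. -/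
open MeasureTheory Filter Set
open scoped ENNReal

section helpers

variable {X : Type*} [TopologicalSpace X]

lemma my_frontier_iInter_subset {ι : Type*} [Finite ι] (S : ι → Set X) :
    frontier (⋂ i, S i) ⊆ ⋃ i, frontier (S i) := by
  intro x hx
  have h2 : x ∉ ⋂ i, interior (S i) := by
    rw [← interior_iInter_of_finite]; exact hx.2
  obtain ⟨i, hi⟩ : ∃ i, x ∉ interior (S i) := by
    simpa [mem_iInter, not_forall] using h2
  exact mem_iUnion.2 ⟨i, closure_mono (iInter_subset S i) hx.1, hi⟩

lemma my_frontier_inter_subset (s t : Set X) :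
    frontier (s ∩ t) ⊆ frontier s ∪ frontier t := by
  intro x hx
  have h2 : x ∉ interior s ∩ interior t := by rw [← interior_inter]; exact hx.2
  have hcs : x ∈ closure s := closure_mono inter_subset_left hx.1
  have hct : x ∈ closure t := closure_mono inter_subset_right hx.1
  by_cases h : x ∈ interior s
  · exact Or.inr ⟨hct, fun h' => h2 ⟨h, h'⟩⟩
  · exact Or.inl ⟨hcs, h⟩

lemma my_frontier_biUnion (s : Finset ℕ) (g : ℕ → Set X) :
    frontier (⋃ m ∈ s, g m) ⊆ ⋃ m ∈ s, frontier (g m) := by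
  classical
  induction s using Finset.induction_on with
  | empty => simp
  | insert _ _ h ih =>
    rw [Finset.set_biUnion_insert]
    refine (frontier_union_subset _ _).trans ?_
    refine (union_subset_union inter_subset_left inter_subset_right).trans ?_
    rw [Finset.set_biUnion_insert]
    exact union_subset_union subset_rfl ih

end helpers

/-- For every `ε > 0` there is a countable Borel partition `D` of `E` into
`P`-continuity sets such that the sets `D (n+1)` have diameter `< ε` and
cover `E0`. -/
lemma exists_continuity_partition {E : Type*} [MetricSpace E] [MeasurableSpace E] [BorelSpace E]
    (P : Measure E) [IsProbabilityMeasure P]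
    (E0 : Set E) (hE0 : MeasurableSet E0) (hsep : TopologicalSpace.IsSeparable E0)
    (hP1 : P E0 = 1) (ε : ℝ) (hε : 0 < ε) :
    ∃ D : ℕ → Set E,
      (∀ n, MeasurableSet (D n)) ∧ (∀ n, P (frontier (D n)) = 0) ∧
      Pairwise (Function.onFun Disjoint D) ∧ (⋃ n, D n) = Set.univ ∧
      (∀ n, EMetric.diam (D (n + 1)) < ENNReal.ofReal ε) ∧
      E0 ⊆ ⋃ n, D (n + 1) := by
  classical
  -- E0 is nonempty since P E0 = 1
  have hE0ne : E0.Nonempty := by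
    rcases E0.eq_empty_or_nonempty with h | h
    · rw [h, measure_empty] at hP1; exact absurd hP1.symm one_ne_zero
    · exact h
  obtain ⟨c, hcc, hcsub⟩ := hsep
  have hcne : c.Nonempty := by
    rcases c.eq_empty_or_nonempty with h | h
    · rw [h, closure_empty, subset_empty_iff] at hcsub
      exact absurd hcsub hE0ne.ne_empty
    · exact h
  obtain ⟨f, hf⟩ := hcc.exists_eq_range hcne
  -- choose radii with null frontier
  have h44 : ε / 4 < ε / 2 := by linarith
  choose r hr hr0 using fun n : ℕ =>
    exists_null_frontier_thickening P ({f n} : Set E) h44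
  set B : ℕ → Set E := fun n => Metric.ball (f n) (r n) with hB
  have hBf : ∀ n, P (frontier (B n)) = 0 := by
    intro n
    have := hr0 n
    rwa [Metric.thickening_singleton] at this
  set U : Set E := ⋃ n, B n with hU
  have hUopen : IsOpen U := isOpen_iUnion fun n => Metric.isOpen_ball
  set C : ℕ → Set E := fun n => B n \ ⋃ m ∈ Finset.range n, B m with hC
  have hCB : ∀ n, C n ⊆ B n := fun n => diff_subset
  have hEU : E0 ⊆ U := by
    intro x hx
    have hx' : x ∈ closure c := hcsub hx
    rw [hf] at hx'
    obtain ⟨y, hy, hxy⟩ := Metric.mem_closure_iff.1 hx' (ε / 4) (by linarith)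
    obtain ⟨n, rfl⟩ := hy
    exact mem_iUnion.2 ⟨n, by
      simp only [hB, Metric.mem_ball]
      exact lt_trans hxy (hr n).1⟩
  have hUC : ∀ x ∈ U, ∃ n, x ∈ C n := by
    intro x hx
    obtain ⟨n, hn⟩ := mem_iUnion.1 hx
    have hex : ∃ n, x ∈ B n := ⟨n, hn⟩
    refine ⟨Nat.find hex, Nat.find_spec hex, ?_⟩
    simp only [Finset.mem_range, mem_iUnion, not_exists]
    intro m hm
    exact Nat.find_min hex hm
  -- the partition
  refine ⟨fun n => Nat.casesOn n Uᶜ C, ?_, ?_, ?_, ?_, ?_, ?_⟩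
  · rintro (_ | n)
    · exact hUopen.measurableSet.compl
    · exact (Metric.isOpen_ball.measurableSet).diff
        (Finset.measurableSet_biUnion _ fun m _ => Metric.isOpen_ball.measurableSet)
  · rintro (_ | n)
    · -- frontier of Uᶜ
      have h1 : frontier (Uᶜ) = frontier U := frontier_compl U
      have h2 : frontier U ⊆ E0ᶜ := by
        rw [hUopen.frontier_eq]
        exact fun x hx => fun hxE0 => hx.2 (hEU hxE0)
      have h3 : P E0ᶜ = 0 := by
        rw [measure_compl hE0 (measure_ne_top P _), hP1, measure_univ, tsub_self]
      exact measure_mono_null (h1 ▸ h2) h3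
    · -- frontier of C n
      have h0 : C n = B n ∩ (⋃ m ∈ Finset.range n, B m)ᶜ := Set.diff_eq _ _
      have h1 : frontier (C n) ⊆ frontier (B n) ∪ ⋃ m ∈ Finset.range n, frontier (B m) := by
        rw [h0]
        refine (my_frontier_inter_subset _ _).trans ?_
        rw [frontier_compl]
        exact union_subset_union subset_rfl (my_frontier_biUnion _ _)
      refine measure_mono_null h1 (measure_union_null (hBf n) ?_)
      exact (measure_biUnion_null_iff (Finset.range n).countable_toSet).2
        fun m _ => hBf m
  · -- pairwise disjoint
    have hd0 : ∀ n, Disjoint (Uᶜ) (C n) := fun n =>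
      disjoint_compl_left.mono_right ((hCB n).trans (subset_iUnion B n))
    have hdlt : ∀ m n, m < n → Disjoint (C m) (C n) := by
      intro m n hmn
      rw [disjoint_left]
      intro x hxm hxn
      have : x ∈ ⋃ j ∈ Finset.range n, B j :=
        mem_biUnion (Finset.mem_range.2 hmn) (hCB m hxm)
      exact hxn.2 this
    rintro (_ | m) (_ | n) hmn
    · exact absurd rfl hmn
    · exact hd0 n
    · exact (hd0 m).symm
    · rcases Nat.lt_or_ge (m+1) (n+1) with h | h
      · exact hdlt m n (Nat.succ_lt_succ_iff.1 h)
      · exact (hdlt n m (by omega)).symm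
  · -- union is univ
    rw [eq_univ_iff_forall]
    intro x
    by_cases hx : x ∈ U
    · obtain ⟨n, hn⟩ := hUC x hx
      exact mem_iUnion.2 ⟨n + 1, hn⟩
    · exact mem_iUnion.2 ⟨0, hx⟩
  · -- diameters
    intro n
    have h1 : EMetric.diam (C n) ≤ EMetric.diam (B n) := EMetric.diam_mono (hCB n)
    have h2 : EMetric.diam (B n) ≤ 2 * ENNReal.ofReal (r n) := by
      rw [hB]
      simp only
      rw [← Metric.emetric_ball]
      exact EMetric.diam_ball
    refine lt_of_le_of_lt (h1.trans h2) ?_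
    have : (2 : ℝ≥0∞) * ENNReal.ofReal (r n) = ENNReal.ofReal (2 * r n) := by
      rw [ENNReal.ofReal_mul (by norm_num)]
      norm_num
    rw [this]
    exact ENNReal.ofReal_lt_ofReal_iff hε |>.2 (by have := (hr n).2; linarith)
  · -- E0 covered
    intro x hx
    obtain ⟨n, hn⟩ := hUC x (hEU hx)
    exact mem_iUnion.2 ⟨n, hn⟩

/-- Existence of a nested sequence of countable Borel partitions of `E` into
`P`-continuity sets, indexed by finite strings of naturals, such that at level
`k` the cells with all indices positive cover the separable support `E₀` and
have diameter `< 1/k`. (Level `k` of the paper corresponds to `A (k-1)` here;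
the exceptional index `1` of the paper corresponds to `0`.) -/
theorem stmt17 {E : Type*} [MetricSpace E] [MeasurableSpace E] [BorelSpace E]
    (P : Measure E) [IsProbabilityMeasure P]
    (E0 : Set E) (hE0 : MeasurableSet E0) (hsep : TopologicalSpace.IsSeparable E0)
    (hP1 : P E0 = 1) :
    ∃ A : (k : ℕ) → (Fin (k + 1) → ℕ) → Set E,
      (∀ k i, MeasurableSet (A k i)) ∧
      (∀ k i, P (frontier (A k i)) = 0) ∧
      (∀ k, Pairwise (Function.onFun Disjoint (A k))) ∧
      (∀ k, (⋃ i, A k i) = Set.univ) ∧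
      (∀ k i, A k i = ⋃ j : ℕ, A (k + 1) (Fin.snoc i j)) ∧
      (∀ k, ∀ i : Fin (k + 1) → ℕ, (∀ m, 0 < i m) →
        EMetric.diam (A k i) < ENNReal.ofReal (1 / (k + 1))) ∧
      (∀ k, E0 ⊆ ⋃ i ∈ {i : Fin (k + 1) → ℕ | ∀ m, 0 < i m}, A k i) := by
  classical
  choose D hmeas hfr hdis huniv hdiam hcov using fun k : ℕ =>
    exists_continuity_partition P E0 hE0 hsep hP1 (1 / ((k : ℝ) + 1))
      (by positivity)
  refine ⟨fun k i => ⋂ m : Fin (k + 1), D (m : ℕ) (i m), ?_, ?_, ?_, ?_, ?_, ?_, ?_⟩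
  · exact fun k i => MeasurableSet.iInter fun m => hmeas _ _
  · intro k i
    exact measure_mono_null (my_frontier_iInter_subset _)
      (measure_iUnion_null fun m => hfr _ _)
  · intro k i j hij
    obtain ⟨m, hm⟩ := Function.ne_iff.1 hij
    exact Disjoint.mono (iInter_subset _ m) (iInter_subset _ m) (hdis (m : ℕ) hm)
  · intro k
    rw [eq_univ_iff_forall]
    intro x
    have hx : ∀ m : Fin (k + 1), ∃ n, x ∈ D (m : ℕ) n := fun m =>
      mem_iUnion.1 (eq_univ_iff_forall.1 (huniv (m : ℕ)) x)
    choose g hg using hx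
    exact mem_iUnion.2 ⟨fun m => g m, mem_iInter.2 fun m => hg m⟩
  · intro k i
    ext x
    simp only [mem_iInter, mem_iUnion]
    constructor
    · intro h
      obtain ⟨j, hj⟩ := mem_iUnion.1 (eq_univ_iff_forall.1 (huniv (k + 1)) x)
      refine ⟨j, fun m => ?_⟩
      induction m using Fin.lastCases with
      | last => simpa [Fin.snoc_last, Fin.val_last] using hj
      | cast m => simpa [Fin.snoc_castSucc, Fin.coe_castSucc] using h m
    · rintro ⟨j, hj⟩ m
      have := hj m.castSucc
      simpa [Fin.snoc_castSucc, Fin.coe_castSucc] using this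
  · intro k i hi
    obtain ⟨n, hn⟩ := Nat.exists_eq_succ_of_ne_zero (Nat.pos_iff_ne_zero.1 (hi (Fin.last k)))
    have hsub : (⋂ m : Fin (k + 1), D (m : ℕ) (i m)) ⊆ D k (n + 1) := by
      have := iInter_subset (fun m : Fin (k + 1) => D (m : ℕ) (i m)) (Fin.last k)
      rwa [Fin.val_last, hn] at this
    exact lt_of_le_of_lt (EMetric.diam_mono hsub) (hdiam k n)
  · intro k x hx
    have hxm : ∀ m : Fin (k + 1), ∃ n, x ∈ D (m : ℕ) (n + 1) := fun m =>
      mem_iUnion.1 (hcov (m : ℕ) hx)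
    choose g hg using hxm
    refine mem_iUnion₂.2 ⟨fun m => g m + 1, fun m => Nat.succ_pos _, ?_⟩
    exact mem_iInter.2 fun m => hg m
end
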